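/- arXiv:1810.09169 — 3 statements merged into one kernel-verified Lean document; each statement's English description precedes it below -/
import Mathlib

section
/- Let E be an acyclic directed graph (containing no cycles). Then there exists a Hausdorff CLP-compact topological semigroup containing G(E) as a dense subsemigroup if and only if the multiplication of G(E) is jointly continuous with respect to the topology τ_c; moreover, in that case every Hausdorff CLP-compact topological semigroup containing G(E) as a dense subsemigroup equals G(E) with the topology τ_c, and is compact. -/
/-! Preamble: graph inverse semigroups and compactness-type properties. -/

namespace GISPaper

variable {V E : Type*}

/-- `IsPathFrom src rng v l` means that the list of edges `l` is composable
and starts at the vertex `v`. -/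
def IsPathFrom (src rng : E → V) : V → List E → Prop
  | _, [] => True
  | v, e :: l => src e = v ∧ IsPathFrom src rng (rng e) l

/-- The end vertex of a list of edges starting at the vertex `v`. -/
def pathEnd (rng : E → V) : V → List E → V
  | v, [] => v
  | _, e :: l => pathEnd rng (rng e) l

theorem pathEnd_append (rng : E → V) (v : V) (l₁ l₂ : List E) :
    pathEnd rng v (l₁ ++ l₂) = pathEnd rng (pathEnd rng v l₁) l₂ := by
  induction l₁ generalizing v with
  | nil => rfl
  | cons e l ih => simpa [pathEnd] using ih (rng e)

theorem isPathFrom_append (src rng : E → V) (v : V) (l₁ l₂ : List E) :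
    IsPathFrom src rng v (l₁ ++ l₂) ↔
      IsPathFrom src rng v l₁ ∧ IsPathFrom src rng (pathEnd rng v l₁) l₂ := by
  induction l₁ generalizing v with
  | nil => simp [IsPathFrom, pathEnd]
  | cons e l ih => simp [IsPathFrom, pathEnd, ih (rng e), and_assoc]

/-- A (directed) path in the graph `(V, E, src, rng)`: a starting vertex together
with a composable list of edges (a path of length zero is just a vertex). -/
structure GPath (src rng : E → V) where
  start : V
  edges : List E
  isPath : IsPathFrom src rng start edges

/-- The range (end vertex) of a path. -/
def GPath.range {src rng : E → V} (p : GPath src rng) : V :=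
  pathEnd rng p.start p.edges

/-- The nonzero elements of the graph inverse semigroup: pairs `u v⁻¹` of paths
with `r u = r v`. -/
def GISElem (src rng : E → V) : Type _ :=
  {p : GPath src rng × GPath src rng // p.1.range = p.2.range}

/-- The graph inverse semigroup over the graph `(V, E, src, rng)`: the nonzero
elements `u v⁻¹` together with a zero element (represented by `none`). -/
def GIS (src rng : E → V) : Type _ := Option (GISElem src rng)

instance {src rng : E → V} : Zero (GIS src rng) :=
  ⟨(none : Option (GISElem src rng))⟩

open Classical in
/-- The multiplication of a graph inverse semigroup:
`u₁v₁⁻¹ · u₂v₂⁻¹ = u₁w v₂⁻¹` if `u₂ = v₁ w`, `u₁v₁⁻¹ · u₂v₂⁻¹ = u₁ (v₂ w)⁻¹` if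
`v₁ = u₂ w`, and `0` otherwise; `0` is absorbing. -/
noncomputable def GIS.mul {src rng : E → V} :
    Option (GISElem src rng) → Option (GISElem src rng) → Option (GISElem src rng)
  | some ⟨(u₁, v₁), h₁⟩, some ⟨(u₂, v₂), h₂⟩ =>
    if h : v₁.start = u₂.start ∧ v₁.edges <+: u₂.edges then
      some ⟨(⟨u₁.start, u₁.edges ++ u₂.edges.drop v₁.edges.length, by
        obtain ⟨hs, t, ht⟩ := h
        have hdrop : u₂.edges.drop v₁.edges.length = t := by
          rw [← ht, List.drop_left]
        have hu₂ := u₂.isPath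
        rw [← ht, isPathFrom_append] at hu₂
        rw [hdrop, isPathFrom_append]
        refine ⟨u₁.isPath, ?_⟩
        have he : pathEnd rng u₁.start u₁.edges = pathEnd rng u₂.start v₁.edges := by
          rw [← hs]; exact h₁
        rw [he]; exact hu₂.2⟩, v₂), by
        show pathEnd rng u₁.start (u₁.edges ++ u₂.edges.drop v₁.edges.length) = v₂.range
        obtain ⟨hs, t, ht⟩ := h
        have hdrop : u₂.edges.drop v₁.edges.length = t := by
          rw [← ht, List.drop_left]
        rw [hdrop, pathEnd_append]
        have he : pathEnd rng u₁.start u₁.edges = pathEnd rng u₂.start v₁.edges := by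
          rw [← hs]; exact h₁
        rw [he, ← pathEnd_append, ht]
        exact h₂⟩
    else if h' : u₂.start = v₁.start ∧ u₂.edges <+: v₁.edges then
      some ⟨(u₁, ⟨v₂.start, v₂.edges ++ v₁.edges.drop u₂.edges.length, by
        obtain ⟨hs, t, ht⟩ := h'
        have hdrop : v₁.edges.drop u₂.edges.length = t := by
          rw [← ht, List.drop_left]
        have hv₁ := v₁.isPath
        rw [← ht, isPathFrom_append] at hv₁
        rw [hdrop, isPathFrom_append]
        refine ⟨v₂.isPath, ?_⟩
        have he : pathEnd rng v₂.start v₂.edges = pathEnd rng v₁.start u₂.edges := by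
          rw [← hs]; exact h₂.symm
        rw [he]; exact hv₁.2⟩), by
        show u₁.range = pathEnd rng v₂.start (v₂.edges ++ v₁.edges.drop u₂.edges.length)
        obtain ⟨hs, t, ht⟩ := h'
        have hdrop : v₁.edges.drop u₂.edges.length = t := by
          rw [← ht, List.drop_left]
        have he : pathEnd rng v₂.start v₂.edges = pathEnd rng v₁.start u₂.edges := by
          rw [← hs]; exact h₂.symm
        rw [hdrop, pathEnd_append, he, ← pathEnd_append, ht]
        exact h₁⟩
    else none
  | _, _ => none

noncomputable instance {src rng : E → V} : Mul (GIS src rng) := ⟨GIS.mul⟩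

theorem GIS.zero_mul {src rng : E → V} (x : GIS src rng) : 0 * x = 0 := rfl

/-- The topology in which every nonzero point is isolated and the open
neighbourhoods of `0` are exactly the cofinite sets containing `0`. -/
def tauC (α : Type*) [Zero α] : TopologicalSpace α where
  IsOpen U := (0 : α) ∈ U → Uᶜ.Finite
  isOpen_univ := by simp
  isOpen_inter U W hU hW h := by
    rw [Set.compl_inter]
    exact (hU h.1).union (hW h.2)
  isOpen_sUnion 𝒮 h h0 := by
    obtain ⟨U, hU, hU0⟩ := h0
    exact (h U hU hU0).subset (Set.compl_subset_compl.mpr (Set.subset_sUnion_of_mem hU))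

/-- A topological space is CLP-compact if every cover by clopen sets has a
finite subcover. -/
def CLPCompact (X : Type*) [TopologicalSpace X] : Prop :=
  ∀ 𝒰 : Set (Set X), (∀ U ∈ 𝒰, IsClopen U) → ⋃₀ 𝒰 = Set.univ →
    ∃ ℱ ⊆ 𝒰, ℱ.Finite ∧ ⋃₀ ℱ = Set.univ

/-- A topological space is countably compact if every infinite subset has an
accumulation point. -/
def CountablyCompactSpace (X : Type*) [TopologicalSpace X] : Prop :=
  ∀ B : Set X, B.Infinite → ∃ x : X, AccPt x (Filter.principal B)

/-- A topological space is feebly compact if every locally finite family of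
nonempty open sets is finite. -/
def FeeblyCompact (X : Type*) [TopologicalSpace X] : Prop :=
  ∀ 𝒰 : Set (Set X), (∀ U ∈ 𝒰, IsOpen U ∧ U.Nonempty) →
    (∀ x : X, ∃ N ∈ nhds x, {U ∈ 𝒰 | (U ∩ N).Nonempty}.Finite) → 𝒰.Finite

/-- The multiplication of the bicyclic monoid on `ℕ × ℕ`. -/
def bicyclicMul (x y : ℕ × ℕ) : ℕ × ℕ :=
  (x.1 + y.1 - min x.2 y.1, x.2 + y.2 - min x.2 y.1)

/-- The multiplication of the semigroup of `X × X`-matrix units (with zero `none`). -/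
def matUnitsMul {X : Type*} [DecidableEq X] :
    Option (X × X) → Option (X × X) → Option (X × X)
  | some (a, b), some (c, d) => if b = c then some (a, d) else none
  | _, _ => none

/-- A cycle based at the vertex `e`: a path of nonzero length from `e` to `e`. -/
def HasCycleAt (src rng : E → V) (e : V) : Prop :=
  ∃ p : GPath src rng, p.edges ≠ [] ∧ p.start = e ∧ p.range = e

/-! ### new infrastructure -/

variable {src rng : E → V}

theorem GPath.ext' {p q : GPath src rng} (h1 : p.start = q.start)
    (h2 : p.edges = q.edges) : p = q := by
  cases p; cases q; simp only at h1 h2; subst h1; subst h2; rfl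

theorem elem_ext {a b : GISElem src rng} (h1 : a.1.1 = b.1.1) (h2 : a.1.2 = b.1.2) : a = b :=
  Subtype.ext (Prod.ext h1 h2)

def vPath (src rng : E → V) (w : V) : GPath src rng := ⟨w, [], trivial⟩

@[simp] theorem vPath_start (w : V) : (vPath src rng w).start = w := rfl
@[simp] theorem vPath_edges (w : V) : (vPath src rng w).edges = [] := rfl
@[simp] theorem vPath_range (w : V) : (vPath src rng w).range = w := rfl

theorem glue_isPath (u x v : GPath src rng) (h : u.range = v.range)
    (hs : v.start = x.start) (hp : v.edges <+: x.edges) :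
    IsPathFrom src rng u.start (u.edges ++ x.edges.drop v.edges.length) := by
  obtain ⟨t, ht⟩ := hp
  have hdrop : x.edges.drop v.edges.length = t := by rw [← ht, List.drop_left]
  have hx := x.isPath
  rw [← ht, isPathFrom_append] at hx
  rw [hdrop, isPathFrom_append]
  refine ⟨u.isPath, ?_⟩
  have he : pathEnd rng u.start u.edges = pathEnd rng x.start v.edges := by
    rw [← hs]; exact h
  rw [he]; exact hx.2

theorem glue_range (u x v : GPath src rng) (h : u.range = v.range)
    (hs : v.start = x.start) (hp : v.edges <+: x.edges) :
    pathEnd rng u.start (u.edges ++ x.edges.drop v.edges.length) = x.range := by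
  obtain ⟨t, ht⟩ := hp
  have hdrop : x.edges.drop v.edges.length = t := by rw [← ht, List.drop_left]
  rw [hdrop, pathEnd_append]
  have he : pathEnd rng u.start u.edges = pathEnd rng x.start v.edges := by
    rw [← hs]; exact h
  rw [he, ← pathEnd_append, ht]
  rfl

def gluePath (u x v : GPath src rng) (h : u.range = v.range)
    (hs : v.start = x.start) (hp : v.edges <+: x.edges) : GPath src rng :=
  ⟨u.start, u.edges ++ x.edges.drop v.edges.length, glue_isPath u x v h hs hp⟩

@[simp] theorem gluePath_start (u x v : GPath src rng) (h hs hp) :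
    (gluePath u x v h hs hp).start = u.start := rfl
@[simp] theorem gluePath_edges (u x v : GPath src rng) (h hs hp) :
    (gluePath u x v h hs hp).edges = u.edges ++ x.edges.drop v.edges.length := rfl
theorem gluePath_range (u x v : GPath src rng) (h hs hp) :
    (gluePath u x v h hs hp).range = x.range := glue_range u x v h hs hp




def mkE (p q : GPath src rng) (h : p.range = q.range) : GIS src rng := some ⟨(p, q), h⟩

theorem mkE_ne_zero (p q : GPath src rng) (h : p.range = q.range) : mkE p q h ≠ 0 := by
  intro hx; exact Option.some_ne_none _ hx

theorem mkE_inj {p q : GPath src rng} {h : p.range = q.range} {p' q' : GPath src rng}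
    {h' : p'.range = q'.range}
    (he : mkE (src := src) (rng := rng) p q h = mkE p' q' h') : p = p' ∧ q = q' := by
  have h0 := Option.some.inj he
  exact ⟨congrArg (fun z : GISElem src rng => z.1.1) h0,
    congrArg (fun z : GISElem src rng => z.1.2) h0⟩

theorem mkE_congr {a b a' b' : GPath src rng} {h : a.range = b.range}
    {h' : a'.range = b'.range} (h1 : a = a') (h2 : b = b') : mkE a b h = mkE a' b' h' := by
  subst h1; subst h2; rfl

theorem mul_spec₁ (u₁ v₁ : GPath src rng) (h₁ : u₁.range = v₁.range)
    (u₂ v₂ : GPath src rng) (h₂ : u₂.range = v₂.range)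
    (hc : v₁.start = u₂.start ∧ v₁.edges <+: u₂.edges) :
    mkE u₁ v₁ h₁ * mkE u₂ v₂ h₂ =
      mkE (gluePath u₁ u₂ v₁ h₁ hc.1 hc.2) v₂
        ((gluePath_range u₁ u₂ v₁ h₁ hc.1 hc.2).trans h₂) := by
  show GIS.mul (some ⟨(u₁, v₁), h₁⟩) (some ⟨(u₂, v₂), h₂⟩) = _
  rw [GIS.mul.eq_def]
  dsimp only
  rw [dif_pos hc]
  rfl

theorem mul_spec₂ (u₁ v₁ : GPath src rng) (h₁ : u₁.range = v₁.range)
    (u₂ v₂ : GPath src rng) (h₂ : u₂.range = v₂.range)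
    (hc1 : ¬(v₁.start = u₂.start ∧ v₁.edges <+: u₂.edges))
    (hc2 : u₂.start = v₁.start ∧ u₂.edges <+: v₁.edges) :
    mkE u₁ v₁ h₁ * mkE u₂ v₂ h₂ =
      mkE u₁ (gluePath v₂ v₁ u₂ h₂.symm hc2.1 hc2.2)
        (h₁.trans (gluePath_range v₂ v₁ u₂ h₂.symm hc2.1 hc2.2).symm) := by
  show GIS.mul (some ⟨(u₁, v₁), h₁⟩) (some ⟨(u₂, v₂), h₂⟩) = _
  rw [GIS.mul.eq_def]
  dsimp only
  rw [dif_neg hc1, dif_pos hc2]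
  rfl

theorem mul_spec₀ (u₁ v₁ : GPath src rng) (h₁ : u₁.range = v₁.range)
    (u₂ v₂ : GPath src rng) (h₂ : u₂.range = v₂.range)
    (hc1 : ¬(v₁.start = u₂.start ∧ v₁.edges <+: u₂.edges))
    (hc2 : ¬(u₂.start = v₁.start ∧ u₂.edges <+: v₁.edges)) :
    mkE u₁ v₁ h₁ * mkE u₂ v₂ h₂ = 0 := by
  show GIS.mul (some ⟨(u₁, v₁), h₁⟩) (some ⟨(u₂, v₂), h₂⟩) = _
  rw [GIS.mul.eq_def]
  dsimp only
  rw [dif_neg hc1, dif_neg hc2]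
  rfl

theorem mul_zero' (a : GIS src rng) : a * (0 : GIS src rng) = 0 := by
  show GIS.mul a none = none
  cases a with
  | none => rfl
  | some e => obtain ⟨⟨u, v⟩, h⟩ := e; rfl

theorem zero_def : (0 : GIS src rng) = none := rfl

def someE (e : GISElem src rng) : GIS src rng := some e

theorem someE_inj : Function.Injective (someE (src := src) (rng := rng)) := by
  intro a b h; exact Option.some.inj h

theorem someE_ne_zero (e : GISElem src rng) : someE e ≠ 0 := by
  intro hx; exact Option.some_ne_none _ hx

theorem someE_eq_mkE (e : GISElem src rng) : someE e = mkE e.1.1 e.1.2 e.2 := by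
  obtain ⟨⟨p, q⟩, h⟩ := e; rfl

theorem mul_exact (a b c : GPath src rng) (h₁ : a.range = b.range) (h₂ : b.range = c.range) :
    mkE (src := src) (rng := rng) a b h₁ * mkE b c h₂ = mkE a c (h₁.trans h₂) := by
  rw [mul_spec₁ a b h₁ b c h₂ ⟨rfl, List.prefix_refl _⟩]
  unfold mkE
  congr 1
  exact elem_ext (GPath.ext' rfl (by simp [gluePath])) rfl

theorem mul_eq_zero_iff (u₁ v₁ : GPath src rng) (h₁ : u₁.range = v₁.range)
    (u₂ v₂ : GPath src rng) (h₂ : u₂.range = v₂.range) :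
    mkE u₁ v₁ h₁ * mkE u₂ v₂ h₂ = (0 : GIS src rng) ↔
      ¬(v₁.start = u₂.start ∧ v₁.edges <+: u₂.edges) ∧
      ¬(u₂.start = v₁.start ∧ u₂.edges <+: v₁.edges) := by
  constructor
  · intro h
    by_cases hc1 : v₁.start = u₂.start ∧ v₁.edges <+: u₂.edges
    · rw [mul_spec₁ u₁ v₁ h₁ u₂ v₂ h₂ hc1] at h
      exact absurd h (mkE_ne_zero _ _ _)
    · by_cases hc2 : u₂.start = v₁.start ∧ u₂.edges <+: v₁.edges
      · rw [mul_spec₂ u₁ v₁ h₁ u₂ v₂ h₂ hc1 hc2] at h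
        exact absurd h (mkE_ne_zero _ _ _)
      · exact ⟨hc1, hc2⟩
  · intro ⟨hc1, hc2⟩
    exact mul_spec₀ u₁ v₁ h₁ u₂ v₂ h₂ hc1 hc2

/-! ### acyclicity consequences -/

theorem eq_of_prefix_of_range_eq
    (hacyc : ∀ p : GPath src rng, p.edges ≠ [] → p.start ≠ p.range) {p q : GPath src rng}
    (hs : p.start = q.start) (hp : p.edges <+: q.edges) (hr : p.range = q.range) : p = q := by
  obtain ⟨t, ht⟩ := hp
  have h2 : IsPathFrom src rng p.start (p.edges ++ t) := by
    rw [ht, hs]; exact q.isPath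
  have h3 := (isPathFrom_append src rng p.start p.edges t).mp h2
  have hq : q.range = pathEnd rng p.range t := by
    show pathEnd rng q.start q.edges = _
    rw [← ht, ← hs, pathEnd_append]
    rfl
  by_cases hne : t = []
  · subst hne
    refine GPath.ext' hs ?_
    rw [← ht, List.append_nil]
  · exfalso
    apply hacyc ⟨p.range, t, h3.2⟩ hne
    show p.range = pathEnd rng p.range t
    rw [← hq, hr]

theorem idem_of_sq_ne_zero
    (hacyc : ∀ p : GPath src rng, p.edges ≠ [] → p.start ≠ p.range)
    {p q : GPath src rng} {h : p.range = q.range}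
    (hne : mkE p q h * mkE p q h ≠ 0) : p = q := by
  by_cases hc1 : q.start = p.start ∧ q.edges <+: p.edges
  · exact (eq_of_prefix_of_range_eq hacyc hc1.1 hc1.2 h.symm).symm
  · by_cases hc2 : p.start = q.start ∧ p.edges <+: q.edges
    · exact eq_of_prefix_of_range_eq hacyc hc2.1 hc2.2 h
    · exact absurd (mul_spec₀ p q h p q h hc1 hc2) hne

/-! ### idempotents and special elements -/

def eIdem (q : GPath src rng) : GIS src rng := mkE q q rfl

theorem eIdem_mul_self (q : GPath src rng) : eIdem q * eIdem q = eIdem q :=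
  mul_exact q q q rfl rfl

theorem eIdem_inj : Function.Injective (eIdem (src := src) (rng := rng)) := by
  intro a b h
  exact (mkE_inj h).1

theorem eIdem_ne_zero (q : GPath src rng) : eIdem q ≠ 0 := mkE_ne_zero _ _ _

theorem path_prefix_antisymm {p q : GPath src rng} (hs : p.start = q.start)
    (h1 : p.edges <+: q.edges) (h2 : q.edges <+: p.edges) : p = q :=
  GPath.ext' hs (h1.eq_of_length_le h2.length_le)

theorem eIdem_orth_of_range_eq
    (hacyc : ∀ p : GPath src rng, p.edges ≠ [] → p.start ≠ p.range)
    {p q : GPath src rng} (hr : p.range = q.range) (hne : p ≠ q) :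
    eIdem p * eIdem q = 0 := by
  apply mul_spec₀
  · intro hc
    exact hne (eq_of_prefix_of_range_eq hacyc hc.1 hc.2 hr)
  · intro hc
    exact hne (eq_of_prefix_of_range_eq hacyc hc.1 hc.2 hr.symm).symm

theorem eIdem_mul_eIdem_of_prefix {q p : GPath src rng} (hs : q.start = p.start)
    (hp : q.edges <+: p.edges) : eIdem q * eIdem p = eIdem p := by
  rw [show eIdem (src := src) (rng := rng) q * eIdem p = _ from
    mul_spec₁ q q rfl p p rfl ⟨hs, hp⟩]
  unfold mkE
  congr 1
  refine elem_ext (GPath.ext' hs ?_) rfl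
  obtain ⟨t, ht⟩ := hp
  show q.edges ++ p.edges.drop q.edges.length = p.edges
  rw [← ht, List.drop_left]

theorem eIdem_mul_eIdem_of_prefix' {p q : GPath src rng} (hs : p.start = q.start)
    (hp : p.edges <+: q.edges) : eIdem q * eIdem p = eIdem q := by
  by_cases hc1 : q.start = p.start ∧ q.edges <+: p.edges
  · have : q = p := path_prefix_antisymm hc1.1 hc1.2 hp
    subst this
    exact eIdem_mul_self q
  · rw [show eIdem (src := src) (rng := rng) q * eIdem p = _ from
      mul_spec₂ q q rfl p p rfl hc1 ⟨hs, hp⟩]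
    unfold mkE
    congr 1
    refine elem_ext rfl (GPath.ext' hs ?_)
    obtain ⟨t, ht⟩ := hp
    show p.edges ++ q.edges.drop p.edges.length = q.edges
    rw [← ht, List.drop_left]

def onePt (src rng : E → V) (w : V) : GIS src rng := eIdem (vPath src rng w)

theorem onePt_mul_onePt (w : V) : onePt src rng w * onePt src rng w = onePt src rng w :=
  eIdem_mul_self _

theorem onePt_inj : Function.Injective (onePt src rng) := by
  intro a b h
  have := eIdem_inj h
  exact congrArg GPath.start this

theorem onePt_orth {w w' : V} (hne : w ≠ w') : onePt src rng w * onePt src rng w' = 0 := by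
  refine mul_spec₀ _ _ _ _ _ _ ?_ ?_
  · intro hc; exact hne hc.1
  · intro hc; exact hne hc.1.symm

theorem onePt_mul_eIdem {p : GPath src rng} {w : V} (hp : p.start = w) :
    onePt src rng w * eIdem p = eIdem p :=
  eIdem_mul_eIdem_of_prefix (q := vPath src rng w) (p := p) (by simp [hp]) (by simp)

theorem onePt_mul_eIdem_ne {p : GPath src rng} {w : V} (hp : p.start ≠ w) :
    onePt src rng w * eIdem p = 0 := by
  refine mul_spec₀ _ _ _ _ _ _ ?_ ?_
  · intro hc; exact hp hc.1.symm
  · intro hc; exact hp hc.1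

def rowE (q : GPath src rng) : GIS src rng := mkE (vPath src rng q.range) q (vPath_range q.range)

def colE (q : GPath src rng) : GIS src rng := mkE q (vPath src rng q.range) (vPath_range q.range).symm

theorem onePt_mul_rowE (q : GPath src rng) :
    onePt src rng q.range * rowE q = rowE q :=
  mul_exact (vPath src rng q.range) (vPath src rng q.range) q (by simp) (by simp)

theorem colE_mul_onePt (q : GPath src rng) :
    colE q * onePt src rng q.range = colE q :=
  mul_exact q (vPath src rng q.range) (vPath src rng q.range) (by simp) (by simp)

theorem colE_mul_rowE (q : GPath src rng) : colE q * rowE q = eIdem q :=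
  mul_exact q (vPath src rng q.range) q (by simp) (by simp)

theorem rowE_inj : Function.Injective (rowE (src := src) (rng := rng)) := by
  intro a b h; exact (mkE_inj h).2

theorem colE_inj : Function.Injective (colE (src := src) (rng := rng)) := by
  intro a b h; exact (mkE_inj h).1

theorem mul_eIdem_snd (e : GISElem src rng) : someE e * eIdem e.1.2 = someE e := by
  obtain ⟨⟨p, q⟩, h⟩ := e
  exact mul_exact p q q h rfl

theorem eIdem_fst_mul (e : GISElem src rng) : eIdem e.1.1 * someE e = someE e := by
  obtain ⟨⟨p, q⟩, h⟩ := e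
  exact mul_exact p p q rfl h

/-! ### the representation by partial maps, and associativity -/

open Classical in
noncomputable def rho : GIS src rng → GPath src rng → Option (GPath src rng)
  | none => fun _ => none
  | some ⟨(u, v), h⟩ => fun x =>
      if hc : v.start = x.start ∧ v.edges <+: x.edges then
        some (gluePath u x v h hc.1 hc.2)
      else none

theorem rho_zero : rho (0 : GIS src rng) = fun _ => none := rfl

theorem rho_mkE_pos (u v : GPath src rng) (h : u.range = v.range) (x : GPath src rng)
    (hc : v.start = x.start ∧ v.edges <+: x.edges) :
    rho (mkE u v h) x = some (gluePath u x v h hc.1 hc.2) := by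
  show rho (some (⟨(u, v), h⟩ : GISElem src rng)) x = _
  exact dif_pos hc

theorem rho_mkE_neg (u v : GPath src rng) (h : u.range = v.range) (x : GPath src rng)
    (hc : ¬(v.start = x.start ∧ v.edges <+: x.edges)) :
    rho (mkE u v h) x = none := by
  show rho (some (⟨(u, v), h⟩ : GISElem src rng)) x = _
  exact dif_neg hc

theorem rho_mkE_self (u v : GPath src rng) (h : u.range = v.range) :
    rho (mkE u v h) v = some u := by
  rw [rho_mkE_pos u v h v ⟨rfl, List.prefix_refl _⟩]
  congr 1
  exact GPath.ext' rfl (by simp [gluePath])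

theorem rho_mul (a b : GIS src rng) :
    rho (a * b) = fun x => (rho b x).bind (rho a) := by
  cases a with
  | none =>
    show rho ((0 : GIS src rng) * b) = _
    rw [GIS.zero_mul]
    funext x
    cases hb : rho b x with
    | none => rfl
    | some y => rfl
  | some ea =>
    cases b with
    | none =>
      show rho (someE ea * (0 : GIS src rng)) = _
      rw [mul_zero']
      funext x
      rfl
    | some eb =>
      obtain ⟨⟨u₁, v₁⟩, h₁⟩ := ea
      obtain ⟨⟨u₂, v₂⟩, h₂⟩ := eb
      show rho (mkE u₁ v₁ h₁ * mkE u₂ v₂ h₂) =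
        fun x => (rho (mkE u₂ v₂ h₂) x).bind (rho (mkE u₁ v₁ h₁))
      funext x
      by_cases hc1 : v₁.start = u₂.start ∧ v₁.edges <+: u₂.edges
      · rw [mul_spec₁ u₁ v₁ h₁ u₂ v₂ h₂ hc1]
        by_cases hx : v₂.start = x.start ∧ v₂.edges <+: x.edges
        · rw [rho_mkE_pos u₂ v₂ h₂ x hx, rho_mkE_pos _ v₂ _ x hx, Option.bind_some]
          set G := gluePath u₂ x v₂ h₂ hx.1 hx.2 with hG
          have hc1' : v₁.start = G.start ∧ v₁.edges <+: G.edges :=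
            ⟨hc1.1, hc1.2.trans (List.prefix_append _ _)⟩
          rw [rho_mkE_pos u₁ v₁ h₁ G hc1']
          congr 1
          refine GPath.ext' rfl ?_
          show (u₁.edges ++ u₂.edges.drop v₁.edges.length) ++ x.edges.drop v₂.edges.length =
            u₁.edges ++ (u₂.edges ++ x.edges.drop v₂.edges.length).drop v₁.edges.length
          rw [List.drop_append_of_le_length hc1.2.length_le, List.append_assoc]
        · rw [rho_mkE_neg u₂ v₂ h₂ x hx, rho_mkE_neg _ v₂ _ x hx]
          rfl
      · by_cases hc2 : u₂.start = v₁.start ∧ u₂.edges <+: v₁.edges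
        · rw [mul_spec₂ u₁ v₁ h₁ u₂ v₂ h₂ hc1 hc2]
          set Q := gluePath v₂ v₁ u₂ h₂.symm hc2.1 hc2.2 with hQ
          obtain ⟨t, ht⟩ := hc2.2
          have hdrop : v₁.edges.drop u₂.edges.length = t := by rw [← ht, List.drop_left]
          have hQe : Q.edges = v₂.edges ++ t := by rw [hQ]; show v₂.edges ++ _ = _; rw [hdrop]
          have hQs : Q.start = v₂.start := rfl
          by_cases hx : v₂.start = x.start ∧ v₂.edges <+: x.edges
          · rw [rho_mkE_pos u₂ v₂ h₂ x hx, Option.bind_some]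
            set G := gluePath u₂ x v₂ h₂ hx.1 hx.2 with hG
            have hGe : G.edges = u₂.edges ++ x.edges.drop v₂.edges.length := rfl
            by_cases hy : v₁.start = G.start ∧ v₁.edges <+: G.edges
            · have hQx : Q.start = x.start ∧ Q.edges <+: x.edges := by
                refine ⟨hx.1, ?_⟩
                obtain ⟨r, hr⟩ := hy.2
                have hGe2 : u₂.edges ++ x.edges.drop v₂.edges.length = (u₂.edges ++ t) ++ r := by
                  rw [← hGe, ← hr, ht]
                rw [List.append_assoc] at hGe2
                have hxe : x.edges.drop v₂.edges.length = t ++ r :=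
                  List.append_cancel_left hGe2
                obtain ⟨w, hw⟩ := hx.2
                have hwd : w = t ++ r := by
                  rw [← hw, List.drop_left] at hxe
                  exact hxe
                rw [hQe, ← hw, hwd]
                exact ⟨r, by rw [List.append_assoc]⟩
              rw [rho_mkE_pos u₁ Q _ x hQx, rho_mkE_pos u₁ v₁ h₁ G hy]
              congr 1
              refine GPath.ext' rfl ?_
              show u₁.edges ++ x.edges.drop Q.edges.length =
                u₁.edges ++ G.edges.drop v₁.edges.length
              congr 1
              have hlen : u₂.edges.length ≤ v₁.edges.length := by
                rw [← ht]; simp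
              have h1 : G.edges.drop v₁.edges.length =
                  (x.edges.drop v₂.edges.length).drop (v₁.edges.length - u₂.edges.length) := by
                rw [hGe]
                rw [show v₁.edges.length = u₂.edges.length + (v₁.edges.length - u₂.edges.length) by
                  omega, List.drop_length_add_append]
                congr 1
                omega
              rw [h1, List.drop_drop]
              congr 1
              rw [hQe, List.length_append]
              have : t.length = v₁.edges.length - u₂.edges.length := by
                rw [← ht]; simp
              omega
            · have hnQx : ¬(Q.start = x.start ∧ Q.edges <+: x.edges) := by
                intro hQx
                apply hy
                refine ⟨show v₁.start = u₂.start from hc2.1.symm, ?_⟩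
                obtain ⟨r, hr⟩ := hQx.2
                have hxe : x.edges = (v₂.edges ++ t) ++ r := by rw [← hr, hQe]
                have hxd : x.edges.drop v₂.edges.length = t ++ r := by
                  rw [hxe, List.append_assoc, List.drop_left]
                rw [hGe, hxd, ← ht]
                exact ⟨r, by rw [List.append_assoc]⟩
              rw [rho_mkE_neg u₁ v₁ h₁ G hy, rho_mkE_neg u₁ Q _ x hnQx]
          · have hnQx : ¬(Q.start = x.start ∧ Q.edges <+: x.edges) := by
              intro hQx
              apply hx
              refine ⟨hQx.1, (List.prefix_append v₂.edges t).trans ?_⟩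
              rw [← hQe]
              exact hQx.2
            rw [rho_mkE_neg u₂ v₂ h₂ x hx, rho_mkE_neg u₁ Q _ x hnQx]
            rfl
        · rw [mul_spec₀ u₁ v₁ h₁ u₂ v₂ h₂ hc1 hc2, rho_zero]
          by_cases hx : v₂.start = x.start ∧ v₂.edges <+: x.edges
          · set G := gluePath u₂ x v₂ h₂ hx.1 hx.2 with hG
            have hny : ¬(v₁.start = G.start ∧ v₁.edges <+: G.edges) := by
              intro hy
              have h1 : v₁.edges <+: u₂.edges ++ x.edges.drop v₂.edges.length := hy.2
              have h2 : u₂.edges <+: u₂.edges ++ x.edges.drop v₂.edges.length :=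
                List.prefix_append _ _
              have hstart : v₁.start = u₂.start := hy.1
              rcases List.prefix_or_prefix_of_prefix h1 h2 with h | h
              · exact hc1 ⟨hstart, h⟩
              · exact hc2 ⟨hstart.symm, h⟩
            rw [rho_mkE_pos u₂ v₂ h₂ x hx, Option.bind_some, rho_mkE_neg u₁ v₁ h₁ G hny]
          · rw [rho_mkE_neg u₂ v₂ h₂ x hx]
            rfl

theorem rho_inj : Function.Injective (rho : GIS src rng → GPath src rng → Option (GPath src rng)) := by
  intro a b hab
  cases a with
  | none =>
    cases b with
    | none => rfl
    | some e =>
      exfalso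
      obtain ⟨⟨u, v⟩, h⟩ := e
      have h1 := congrFun hab v
      rw [show rho (none : GIS src rng) v = none from rfl,
        show rho (some ⟨(u, v), h⟩ : GIS src rng) v = some u from rho_mkE_self u v h] at h1
      exact Option.some_ne_none _ h1.symm
  | some e =>
    cases b with
    | none =>
      exfalso
      obtain ⟨⟨u, v⟩, h⟩ := e
      have h1 := congrFun hab v
      rw [show rho (none : GIS src rng) v = none from rfl,
        show rho (some ⟨(u, v), h⟩ : GIS src rng) v = some u from rho_mkE_self u v h] at h1
      exact Option.some_ne_none _ h1
    | some e' =>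
      obtain ⟨⟨u, v⟩, h⟩ := e
      obtain ⟨⟨u', v'⟩, h'⟩ := e'
      have h1 := congrFun hab v
      have h2 := congrFun hab v'
      rw [show rho (some ⟨(u, v), h⟩ : GIS src rng) v = some u from rho_mkE_self u v h] at h1
      rw [show rho (some ⟨(u', v'), h'⟩ : GIS src rng) v' = some u' from rho_mkE_self u' v' h'] at h2
      -- h1 : some u = rho (mkE u' v' h') v ; so v' <= v
      by_cases hc : v'.start = v.start ∧ v'.edges <+: v.edges
      · by_cases hc' : v.start = v'.start ∧ v.edges <+: v'.edges
        · have hv : v = v' := path_prefix_antisymm hc'.1 hc'.2 hc.2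
          subst hv
          rw [show rho (some ⟨(u', v), h'⟩ : GIS src rng) v = some u' from rho_mkE_self u' v h'] at h1
          have := Option.some.inj h1
          subst this
          rfl
        · exfalso
          rw [show rho (some ⟨(u, v), h⟩ : GIS src rng) v' = none from rho_mkE_neg u v h v' hc'] at h2
          exact Option.some_ne_none _ h2.symm
      · exfalso
        rw [show rho (some ⟨(u', v'), h'⟩ : GIS src rng) v = none from rho_mkE_neg u' v' h' v hc] at h1
        exact Option.some_ne_none _ h1

theorem mul_assoc' (a b c : GIS src rng) : a * b * c = a * (b * c) := by
  apply rho_inj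
  rw [rho_mul (a * b) c, rho_mul a b, rho_mul a (b * c), rho_mul b c]
  funext x
  exact (Option.bind_assoc (rho c x) (rho b) (rho a)).symm

/-! ### finiteness of prefix/suffix families -/

theorem prefix_paths_finite (p : GPath src rng) :
    {q : GPath src rng | q.start = p.start ∧ q.edges <+: p.edges}.Finite := by
  apply Set.Finite.of_finite_image (f := fun q : GPath src rng => q.edges.length)
  · refine (Set.finite_Iic p.edges.length).subset ?_
    rintro n ⟨q, ⟨h1, h2⟩, rfl⟩
    exact h2.length_le
  · rintro q ⟨h1q, h2q⟩ q' ⟨h1q', h2q'⟩ hlen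
    change q.edges.length = q'.edges.length at hlen
    refine GPath.ext' (h1q.trans h1q'.symm) ?_
    rw [List.prefix_iff_eq_take.mp h2q, List.prefix_iff_eq_take.mp h2q', hlen]

def suffixSet (u v : GPath src rng) : Set (GISElem src rng) :=
  {e | ∃ sl : List E, u.start = e.1.1.start ∧ v.start = e.1.2.start ∧
       u.edges = e.1.1.edges ++ sl ∧ v.edges = e.1.2.edges ++ sl}

theorem suffixSet_finite (u v : GPath src rng) : (suffixSet u v).Finite := by
  apply Set.Finite.of_finite_image (f := fun e : GISElem src rng => e.1.1.edges.length)
  · refine (Set.finite_Iic u.edges.length).subset ?_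
    rintro n ⟨e, ⟨sl, h1, h2, h3, h4⟩, rfl⟩
    show e.1.1.edges.length ≤ u.edges.length
    rw [h3, List.length_append]
    omega
  · rintro e ⟨sl, h1, h2, h3, h4⟩ e' ⟨sl', h1', h2', h3', h4'⟩ hlen
    change e.1.1.edges.length = e'.1.1.edges.length at hlen
    have hu : e.1.1.edges ++ sl = e'.1.1.edges ++ sl' := by rw [← h3, ← h3']
    obtain ⟨ha, hb⟩ := List.append_inj hu hlen
    have hv : e.1.2.edges ++ sl = e'.1.2.edges ++ sl := by
      rw [← h4]; rw [hb, ← h4']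
    have hc : e.1.2.edges = e'.1.2.edges := List.append_cancel_right hv
    exact elem_ext (GPath.ext' (h1.symm.trans h1') ha) (GPath.ext' (h2.symm.trans h2') hc)

/-! ### the fiber of `u⁻¹ · x · v` over the vertex idempotent -/

theorem drop_nil_eq {l₁ l₂ : List E} (hp : l₁ <+: l₂) (hd : l₂.drop l₁.length = []) :
    l₁ = l₂ :=
  hp.eq_of_length_le (List.drop_eq_nil_iff.mp hd)

theorem fiber_char (u v : GPath src rng) (h : u.range = v.range) (g : GIS src rng)
    (hg : rowE u * g * colE v = onePt src rng u.range) :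
    ∃ e ∈ suffixSet u v, g = someE e := by
  have hvv : (vPath src rng v.range) = (vPath src rng u.range) := by rw [h]
  cases g with
  | none =>
    exfalso
    have h1 : rowE (src := src) (rng := rng) u * (0 : GIS src rng) = 0 := mul_zero' _
    rw [show (none : GIS src rng) = (0 : GIS src rng) from rfl, h1, GIS.zero_mul] at hg
    exact mkE_ne_zero _ _ _ hg.symm
  | some e =>
    obtain ⟨⟨x₁, x₂⟩, hx⟩ := e
    rw [show (some ⟨(x₁, x₂), hx⟩ : GIS src rng) = mkE x₁ x₂ hx from rfl] at hg
    unfold rowE colE at hg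
    -- first product
    by_cases c1 : u.start = x₁.start ∧ u.edges <+: x₁.edges
    · rw [mul_spec₁ _ u _ x₁ x₂ hx c1] at hg
      set A := gluePath (vPath src rng u.range) x₁ u (by simp) c1.1 c1.2 with hA
      have hAe : A.edges = x₁.edges.drop u.edges.length := by
        rw [hA]; show [] ++ _ = _; rw [List.nil_append]
      by_cases d1 : x₂.start = v.start ∧ x₂.edges <+: v.edges
      · rw [mul_spec₁ _ x₂ _ v _ _ d1] at hg
        have h2 := (mkE_inj hg).1
        have h3 := congrArg GPath.edges h2
        have h4 : A.edges ++ v.edges.drop x₂.edges.length = [] := h3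
        rw [List.append_eq_nil_iff] at h4
        have hx₁ : u.edges = x₁.edges := drop_nil_eq c1.2 (by rw [← hAe]; exact h4.1)
        have hx₂ : x₂.edges = v.edges := drop_nil_eq d1.2 h4.2
        refine ⟨⟨(x₁, x₂), hx⟩, ⟨[], c1.1, d1.1.symm, by simp [hx₁], by simp [hx₂]⟩, rfl⟩
      · by_cases d2 : v.start = x₂.start ∧ v.edges <+: x₂.edges
        · rw [mul_spec₂ _ x₂ _ v _ _ d1 d2] at hg
          have h2 := (mkE_inj hg).2
          have h3 := congrArg GPath.edges h2
          have h4 : (vPath src rng v.range).edges ++ x₂.edges.drop v.edges.length = [] := h3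
          rw [List.append_eq_nil_iff] at h4
          have hx₂ : v.edges = x₂.edges := drop_nil_eq d2.2 h4.2
          have h5 := (mkE_inj hg).1
          have h6 : A.edges = [] := congrArg GPath.edges h5
          have hx₁ : u.edges = x₁.edges := drop_nil_eq c1.2 (by rw [← hAe]; exact h6)
          refine ⟨⟨(x₁, x₂), hx⟩, ⟨[], c1.1, d2.1, by simp [hx₁], by simp [hx₂]⟩, rfl⟩
        · rw [mul_spec₀ _ x₂ _ v _ _ d1 d2] at hg
          exact absurd hg.symm (mkE_ne_zero _ _ _)
    · by_cases c2 : x₁.start = u.start ∧ x₁.edges <+: u.edges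
      · rw [mul_spec₂ _ u _ x₁ x₂ hx c1 c2] at hg
        set Q := gluePath x₂ u x₁ hx.symm c2.1 c2.2 with hQ
        have hQe : Q.edges = x₂.edges ++ u.edges.drop x₁.edges.length := rfl
        have hQs : Q.start = x₂.start := rfl
        by_cases d1 : Q.start = v.start ∧ Q.edges <+: v.edges
        · rw [mul_spec₁ _ Q _ v _ _ d1] at hg
          have h2 := (mkE_inj hg).1
          have h3 : (vPath src rng u.range).edges ++ v.edges.drop Q.edges.length = [] :=
            congrArg GPath.edges h2
          rw [List.append_eq_nil_iff] at h3
          have hQv : Q.edges = v.edges := drop_nil_eq d1.2 h3.2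
          refine ⟨⟨(x₁, x₂), hx⟩, ⟨u.edges.drop x₁.edges.length, c2.1.symm, ?_, ?_, ?_⟩, rfl⟩
          · rw [← d1.1, hQs]
          · obtain ⟨t, ht⟩ := c2.2
            rw [← ht, List.drop_left]
          · rw [← hQv, hQe]
        · by_cases d2 : v.start = Q.start ∧ v.edges <+: Q.edges
          · rw [mul_spec₂ _ Q _ v _ _ d1 d2] at hg
            have h2 := (mkE_inj hg).2
            have h3 : (vPath src rng v.range).edges ++ Q.edges.drop v.edges.length = [] :=
              congrArg GPath.edges h2
            rw [List.append_eq_nil_iff] at h3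
            have hQv : v.edges = Q.edges := drop_nil_eq d2.2 h3.2
            refine ⟨⟨(x₁, x₂), hx⟩, ⟨u.edges.drop x₁.edges.length, c2.1.symm, ?_, ?_, ?_⟩, rfl⟩
            · rw [d2.1, hQs]
            · obtain ⟨t, ht⟩ := c2.2
              rw [← ht, List.drop_left]
            · rw [hQv, hQe]
          · rw [mul_spec₀ _ Q _ v _ _ d1 d2] at hg
            exact absurd hg.symm (mkE_ne_zero _ _ _)
      · rw [mul_spec₀ _ u _ x₁ x₂ hx c1 c2, GIS.zero_mul] at hg
        exact absurd hg.symm (mkE_ne_zero _ _ _)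

/-! ### topology -/

theorem set_infinite_exists_seq {α : Type*} {s : Set α} (hs : s.Infinite) :
    ∃ f : ℕ → α, Function.Injective f ∧ ∀ n, f n ∈ s := by
  let e := hs.natEmbedding
  exact ⟨fun n => (e n : α), fun a b h => e.injective (Subtype.coe_injective h),
    fun n => (e n).2⟩

theorem set_infinite_exists_pair {α : Type*} {s : Set α} (hs : s.Infinite) :
    ∃ a ∈ s, ∃ b ∈ s, a ≠ b := by
  obtain ⟨a, ha⟩ := hs.nonempty
  obtain ⟨b, hb⟩ := (hs.diff (Set.finite_singleton a)).nonempty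
  exact ⟨b, hb.1, a, ha, by simpa using hb.2⟩

theorem exists_infinite_fiber' {α β : Type*} (f : α → β) (hα : (Set.univ : Set α).Infinite)
    (him : (Set.range f).Finite) : ∃ b, {a | f a = b}.Infinite := by
  by_contra hall
  push_neg at hall
  apply hα
  have h1 : (⋃ b ∈ Set.range f, {a | f a = b}).Finite :=
    Set.Finite.biUnion him (fun b _ => hall b)
  refine h1.subset ?_
  intro a _
  exact Set.mem_biUnion ⟨a, rfl⟩ rfl

section Topo

variable {S : Type*} [tS : TopologicalSpace S] [h2S : T2Space S]
variable {mulS : S → S → S} {ι : GIS src rng → S}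

theorem rectHelper (hcont : Continuous fun p : S × S => mulS p.1 p.2)
    {W : Set S} (hW : IsOpen W) {a b : S} (hab : mulS a b ∈ W) :
    ∃ U V', IsOpen U ∧ IsOpen V' ∧ a ∈ U ∧ b ∈ V' ∧
      ∀ s ∈ U, ∀ t ∈ V', mulS s t ∈ W := by
  have hO : IsOpen ((fun p : S × S => mulS p.1 p.2) ⁻¹' W) := hcont.isOpen_preimage W hW
  obtain ⟨U, V', hU, hV, haU, hbV, hsub⟩ := isOpen_prod_iff.mp hO a b hab
  exact ⟨U, V', hU, hV, haU, hbV, fun s hs t ht => hsub (Set.mk_mem_prod hs ht)⟩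

theorem infinite_trace (hdense : DenseRange ι) {a : S} (hna : ¬ IsOpen ({a} : Set S))
    {Vo : Set S} (hV : IsOpen Vo) (haV : a ∈ Vo) : (Vo ∩ Set.range ι).Infinite := by
  intro hfin
  have h1 : IsClosed ((Vo ∩ Set.range ι) \ {a}) := (hfin.subset Set.diff_subset).isClosed
  set V' := Vo \ ((Vo ∩ Set.range ι) \ {a}) with hV'def
  have hV' : IsOpen V' := hV.sdiff h1
  have haV' : a ∈ V' := ⟨haV, fun hc => hc.2 rfl⟩
  have hsub : V' ⊆ {a} := by
    intro y hy
    by_contra hyne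
    have h2 : IsOpen (V' \ {a}) := hV'.sdiff isClosed_singleton
    have h3 : (V' \ {a}).Nonempty := ⟨y, hy, hyne⟩
    obtain ⟨g, hg⟩ := hdense.exists_mem_open h2 h3
    have h4 : ι g ∈ (Vo ∩ Set.range ι) \ {a} := ⟨⟨hg.1.1, ⟨g, rfl⟩⟩, hg.2⟩
    exact hg.1.2 h4
  have : V' = {a} := Set.Subset.antisymm hsub (by intro y hy; cases hy; exact haV')
  exact hna (this ▸ hV')

theorem acc_point (hCLP : CLPCompact S) {Z : Set S} (hZiso : ∀ z ∈ Z, IsOpen ({z} : Set S))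
    (hZinf : Z.Infinite) : ∃ t : S, ∀ Vo : Set S, IsOpen Vo → t ∈ Vo → (Vo ∩ Z).Infinite := by
  by_contra hno
  push_neg at hno
  have key : ∀ t : S, ∃ Vo, IsOpen Vo ∧ t ∈ Vo ∧ (Vo ∩ Z).Finite := by
    intro t
    obtain ⟨V, h1, h2, h3⟩ := hno t
    exact ⟨V, h1, h2, h3⟩
  have hZopen : IsOpen Z := by
    have : Z = ⋃ z ∈ Z, {z} := by simp
    rw [this]
    exact isOpen_biUnion hZiso
  have hZclosed : IsClosed Z := by
    rw [← isOpen_compl_iff, isOpen_iff_forall_mem_open]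
    intro x hx
    obtain ⟨Vo, hV, hxV, hfin⟩ := key x
    refine ⟨Vo \ (Vo ∩ Z), ?_, hV.sdiff hfin.isClosed, ⟨hxV, fun hc => hx hc.2⟩⟩
    intro y hy
    exact fun hyZ => hy.2 ⟨hy.1, hyZ⟩
  set 𝒰 : Set (Set S) := insert Zᶜ ((fun z => ({z} : Set S)) '' Z) with h𝒰
  have hclopen : ∀ U ∈ 𝒰, IsClopen U := by
    rintro U (rfl | ⟨z, hz, rfl⟩)
    · exact ⟨hZopen.isClosed_compl, hZclosed.isOpen_compl⟩
    · exact ⟨isClosed_singleton, hZiso z hz⟩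
  have hcover : ⋃₀ 𝒰 = Set.univ := by
    apply Set.eq_univ_of_forall
    intro x
    by_cases hx : x ∈ Z
    · exact ⟨{x}, Set.mem_insert_of_mem _ ⟨x, hx, rfl⟩, rfl⟩
    · exact ⟨Zᶜ, Set.mem_insert _ _, hx⟩
  obtain ⟨ℱ, hℱsub, hℱfin, hℱcover⟩ := hCLP 𝒰 hclopen hcover
  apply hZinf
  have hZsub : Z ⊆ ⋃ F ∈ ℱ, (Z ∩ F) := by
    intro z hz
    have : z ∈ ⋃₀ ℱ := hℱcover ▸ Set.mem_univ z
    obtain ⟨F, hF, hzF⟩ := this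
    exact Set.mem_biUnion hF ⟨hz, hzF⟩
  refine (Set.Finite.biUnion hℱfin ?_).subset hZsub
  intro F hF
  rcases hℱsub hF with rfl | ⟨z, hz, rfl⟩
  · exact (Set.Finite.subset (Set.finite_empty) (by intro y hy; exact (hy.2 hy.1).elim))
  · exact (Set.finite_singleton z).subset (Set.inter_subset_right)

theorem acc_seq (hCLP : CLPCompact S) (z : ℕ → S) (hzinj : Function.Injective z)
    (hziso : ∀ n, IsOpen ({z n} : Set S)) :
    ∃ t : S, ∀ Vo : Set S, IsOpen Vo → t ∈ Vo → {n | z n ∈ Vo}.Infinite := by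
  obtain ⟨t, ht⟩ := acc_point hCLP (Z := Set.range z)
    (by rintro _ ⟨n, rfl⟩; exact hziso n) (Set.infinite_range_of_injective hzinj)
  refine ⟨t, fun Vo hV htV => ?_⟩
  have h1 := ht Vo hV htV
  have h2 : (z ⁻¹' (Vo ∩ Set.range z)).Infinite :=
    h1.preimage Set.inter_subset_right
  exact h2.mono (fun n hn => hn.1)

variable (hcont : Continuous fun p : S × S => mulS p.1 p.2)
variable (hCLP : CLPCompact S)
variable (hinj : Function.Injective ι)
variable (hhom : ∀ x y : GIS src rng, ι (x * y) = mulS (ι x) (ι y))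
variable (hdense : DenseRange ι)
variable (hacyc : ∀ p : GPath src rng, p.edges ≠ [] → p.start ≠ p.range)

include hcont hhom hdense in
theorem absorb_right : ∀ s : S, mulS s (ι 0) = ι 0 := by
  have heq : (fun s : S => mulS s (ι 0)) = fun _ => ι 0 := by
    refine Continuous.ext_on hdense ?_ ?_ ?_
    · exact hcont.comp (continuous_id.prodMk continuous_const)
    · exact continuous_const
    · rintro s ⟨x, rfl⟩
      show mulS (ι x) (ι 0) = ι 0
      rw [← hhom x 0, mul_zero']
  exact fun s => congrFun heq s

include hcont hhom hdense in
theorem absorb_left : ∀ s : S, mulS (ι 0) s = ι 0 := by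
  have heq : (fun s : S => mulS (ι 0) s) = fun _ => ι 0 := by
    refine Continuous.ext_on hdense ?_ ?_ ?_
    · exact hcont.comp (continuous_const.prodMk continuous_id)
    · exact continuous_const
    · rintro s ⟨x, rfl⟩
      show mulS (ι 0) (ι x) = ι 0
      rw [← hhom 0 x, GIS.zero_mul]
  exact fun s => congrFun heq s

include hcont hinj hhom hdense hacyc in
theorem onePt_isolated (w : V) : IsOpen ({ι (onePt src rng w)} : Set S) := by
  by_contra hop
  have hne10 : ι (onePt src rng w) ≠ ι (0 : GIS src rng) :=
    fun hh => mkE_ne_zero _ _ _ (hinj hh)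
  have hW0 : IsOpen ({ι (0 : GIS src rng)}ᶜ : Set S) := isOpen_compl_singleton
  have hmem : mulS (ι (onePt src rng w)) (ι (onePt src rng w)) ∈
      ({ι (0 : GIS src rng)}ᶜ : Set S) := by
    rw [← hhom, onePt_mul_onePt]
    exact hne10
  obtain ⟨U1, U2, hU1, hU2, m1, m2, hmul⟩ := rectHelper hcont hW0 hmem
  set U0 := U1 ∩ U2 with hU0def
  have hU0 : IsOpen U0 := hU1.inter hU2
  have hmem0 : ι (onePt src rng w) ∈ U0 := ⟨m1, m2⟩
  have hprod : ∀ g g' : GIS src rng, ι g ∈ U0 → ι g' ∈ U0 → g * g' ≠ 0 := by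
    intro g g' hgm hgm' hz
    have := hmul _ hgm.1 _ hgm'.2
    rw [← hhom, hz] at this
    exact this rfl
  have hidem : ∀ g : GIS src rng, ι g ∈ U0 → ∃ q : GPath src rng, g = eIdem q := by
    intro g hgm
    cases g with
    | none => exact absurd (GIS.zero_mul 0) (hprod _ _ hgm hgm)
    | some e =>
      obtain ⟨⟨p, q⟩, hpq⟩ := e
      have hpq2 : p = q := idem_of_sq_ne_zero hacyc (hprod _ _ hgm hgm)
      subst hpq2
      exact ⟨p, rfl⟩
  have htr : (U0 ∩ Set.range ι).Infinite := infinite_trace hdense hop hU0 hmem0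
  have hpre' : (ι ⁻¹' U0).Infinite :=
    (htr.preimage Set.inter_subset_right).mono (fun g hg => hg.1)
  obtain ⟨y, hymem, hyne⟩ : ∃ y : GIS src rng, ι y ∈ U0 ∧ y ≠ onePt src rng w := by
    obtain ⟨y, hy1, hy2⟩ := (hpre'.diff (Set.finite_singleton (onePt src rng w))).nonempty
    exact ⟨y, hy1, by simpa using hy2⟩
  obtain ⟨p, rfl⟩ := hidem y hymem
  obtain ⟨W1, W2, hW1, hW2, hm1, hm2, hdisj⟩ :=
    t2_separation (show ι (onePt src rng w) ≠ ι (eIdem p) from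
      fun hh => hyne (hinj hh).symm)
  have hcont2 : Continuous (fun s : S => mulS s (ι (eIdem p))) :=
    hcont.comp (continuous_id.prodMk continuous_const)
  have hval : onePt src rng w * eIdem p = eIdem p := by
    by_cases hps : p.start = w
    · exact onePt_mul_eIdem hps
    · exact absurd (onePt_mul_eIdem_ne hps) (hprod _ _ hmem0 hymem)
  have hmemW2 : mulS (ι (onePt src rng w)) (ι (eIdem p)) ∈ W2 := by
    rw [← hhom, hval]; exact hm2
  set U1' := U0 ∩ W1 ∩ ((fun s => mulS s (ι (eIdem p))) ⁻¹' W2) with hU1'def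
  have hU1' : IsOpen U1' := (hU0.inter hW1).inter (hcont2.isOpen_preimage _ hW2)
  have hmem1 : ι (onePt src rng w) ∈ U1' := ⟨⟨hmem0, hm1⟩, hmemW2⟩
  have htr1 := infinite_trace hdense hop hU1' hmem1
  have hpre1 : (ι ⁻¹' U1').Infinite :=
    (htr1.preimage Set.inter_subset_right).mono (fun g hg => hg.1)
  apply hpre1
  refine Set.Finite.subset ((prefix_paths_finite p).image eIdem) ?_
  intro g hg
  obtain ⟨q, rfl⟩ := hidem g hg.1.1
  have hq1 : eIdem q * eIdem p ≠ 0 := hprod _ _ hg.1.1 hymem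
  have hq2 : ι (eIdem q * eIdem p) ∈ W2 := by rw [hhom]; exact hg.2
  by_cases hc1 : q.start = p.start ∧ q.edges <+: p.edges
  · exact ⟨q, hc1, rfl⟩
  · by_cases hc2 : p.start = q.start ∧ p.edges <+: q.edges
    · exfalso
      rw [eIdem_mul_eIdem_of_prefix' hc2.1 hc2.2] at hq2
      exact Set.disjoint_left.mp hdisj hg.1.2 hq2
    · exact absurd (mul_spec₀ q q rfl p p rfl hc1 hc2) hq1

include hcont hinj hhom hdense hacyc in
theorem isolated_nonzero (e : GISElem src rng) : IsOpen ({ι (someE e)} : Set S) := by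
  obtain ⟨⟨u, v⟩, huv⟩ := e
  by_contra hop
  have hPhi1 : Continuous (fun s : S => mulS (ι (rowE u)) s) :=
    hcont.comp (continuous_const.prodMk continuous_id)
  have hPhiCont : Continuous (fun s : S => mulS (mulS (ι (rowE u)) s) (ι (colE v))) :=
    hcont.comp (hPhi1.prodMk continuous_const)
  set O := (fun s : S => mulS (mulS (ι (rowE u)) s) (ι (colE v))) ⁻¹'
    {ι (onePt src rng u.range)} with hOdef
  have hO : IsOpen O :=
    hPhiCont.isOpen_preimage _ (onePt_isolated hcont hinj hhom hdense hacyc u.range)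
  have hmemO : ι (someE ⟨(u, v), huv⟩) ∈ O := by
    simp only [hOdef, Set.mem_preimage, Set.mem_singleton_iff]
    rw [show (someE ⟨(u, v), huv⟩ : GIS src rng) = mkE u v huv from rfl]
    rw [← hhom, ← hhom]
    have h1 : rowE (src := src) (rng := rng) u * mkE u v huv =
        mkE (vPath src rng u.range) v ((vPath_range u.range).trans huv) := by
      have := mul_exact (vPath src rng u.range) u v (by simp) huv
      exact this
    rw [h1]
    have h2 : mkE (vPath src rng u.range) v ((vPath_range u.range).trans huv) * colE v =
        onePt src rng u.range := by
      have h3 := mul_exact (vPath src rng u.range) v (vPath src rng v.range)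
        ((vPath_range u.range).trans huv) (by simp)
      rw [show colE v = mkE v (vPath src rng v.range) (by simp) from rfl, h3]
      exact mkE_congr rfl (by rw [huv])
    rw [h2]
  have hOsub : (ι ⁻¹' O) ⊆ someE '' suffixSet u v := by
    intro g hg
    have hgm : mulS (mulS (ι (rowE u)) (ι g)) (ι (colE v)) = ι (onePt src rng u.range) := hg
    rw [← hhom, ← hhom] at hgm
    obtain ⟨e', he', rfl⟩ := fiber_char u v huv g (hinj hgm)
    exact ⟨e', he', rfl⟩
  have htrO := infinite_trace hdense hop hO hmemO
  exact ((htrO.preimage Set.inter_subset_right).mono (fun g hg => hg.1))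
    (((suffixSet_finite u v).image someE).subset hOsub)

include hcont hinj hhom hdense hacyc in
theorem isolated_of_ne_zero {g : GIS src rng} (hg : g ≠ 0) : IsOpen ({ι g} : Set S) := by
  cases g with
  | none => exact absurd rfl hg
  | some e => exact isolated_nonzero hcont hinj hhom hdense hacyc e

include hcont hCLP hinj hhom hdense hacyc in
theorem ocl (q : ℕ → GPath src rng) (hqinj : Function.Injective q)
    (horth : ∀ m n, m ≠ n → eIdem (q m) * eIdem (q n) = (0 : GIS src rng))
    {W : Set S} (hW : IsOpen W) (h0W : ι 0 ∈ W) :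
    {n | ι (eIdem (q n)) ∉ W}.Finite := by
  by_contra hinf
  replace hinf : {n | ι (eIdem (q n)) ∉ W}.Infinite := hinf
  obtain ⟨f, hfinj, hfmem⟩ := set_infinite_exists_seq hinf
  set z : ℕ → S := fun k => ι (eIdem (q (f k))) with hzdef
  have hzinj : Function.Injective z := by
    intro a b h
    exact hfinj (hqinj (eIdem_inj (hinj h)))
  have hziso : ∀ k, IsOpen ({z k} : Set S) :=
    fun k => isolated_of_ne_zero hcont hinj hhom hdense hacyc (eIdem_ne_zero _)
  obtain ⟨t, ht⟩ := acc_seq hCLP z hzinj hziso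
  have hA : mulS t t = ι 0 := by
    by_contra hne
    have hWc : IsOpen ({ι (0 : GIS src rng)}ᶜ : Set S) := isOpen_compl_singleton
    obtain ⟨U1, U2, hU1, hU2, m1, m2, hmul⟩ := rectHelper hcont hWc hne
    have h1 := ht (U1 ∩ U2) (hU1.inter hU2) ⟨m1, m2⟩
    obtain ⟨k1, hk1, k2, hk2, hkne⟩ := set_infinite_exists_pair h1
    have h2 := hmul _ hk1.1 _ hk2.2
    rw [show mulS (z k1) (z k2) = ι (eIdem (q (f k1)) * eIdem (q (f k2))) from
      (hhom _ _).symm] at h2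
    rw [horth _ _ (fun hc => hkne (hfinj hc))] at h2
    exact h2 rfl
  have hmemW : mulS t t ∈ W := by rw [hA]; exact h0W
  obtain ⟨U1, U2, hU1, hU2, m1, m2, hmul⟩ := rectHelper hcont hW hmemW
  have h1 := ht (U1 ∩ U2) (hU1.inter hU2) ⟨m1, m2⟩
  obtain ⟨k, hk⟩ := h1.nonempty
  have h2 := hmul _ hk.1 _ hk.2
  rw [show mulS (z k) (z k) = ι (eIdem (q (f k)) * eIdem (q (f k))) from (hhom _ _).symm,
    eIdem_mul_self] at h2
  exact hfmem k h2

include hcont hCLP hinj hhom hdense hacyc in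
theorem pnc_right (x : ℕ → GISElem src rng) (hxinj : Function.Injective x)
    (b : ℕ → GIS src rng)
    (hmulb : ∀ n, someE (x n) * b n = someE (x n))
    (hbcof : ∀ U : Set S, IsOpen U → ι 0 ∈ U → {n | ι (b n) ∉ U}.Finite)
    {W : Set S} (hW : IsOpen W) (h0W : ι 0 ∈ W) :
    {n | ι (someE (x n)) ∉ W}.Finite := by
  by_contra hinf
  replace hinf : {n | ι (someE (x n)) ∉ W}.Infinite := hinf
  obtain ⟨f, hfinj, hfmem⟩ := set_infinite_exists_seq hinf
  set z : ℕ → S := fun k => ι (someE (x (f k))) with hzdef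
  have hzinj : Function.Injective z := by
    intro a b h
    exact hfinj (hxinj (someE_inj (hinj h)))
  have hziso : ∀ k, IsOpen ({z k} : Set S) :=
    fun k => isolated_of_ne_zero hcont hinj hhom hdense hacyc (someE_ne_zero _)
  obtain ⟨t, ht⟩ := acc_seq hCLP z hzinj hziso
  have habs : mulS t (ι 0) ∈ W := by
    rw [absorb_right hcont hhom hdense t]; exact h0W
  obtain ⟨U1, U2, hU1, hU2, m1, m2, hmul⟩ := rectHelper hcont hW habs
  have h1 := ht U1 hU1 m1
  have h2 := hbcof U2 hU2 m2
  have h3 : ({k | z k ∈ U1} \ (f ⁻¹' {n | ι (b n) ∉ U2})).Nonempty :=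
    (h1.diff (h2.preimage hfinj.injOn)).nonempty
  obtain ⟨k, hk1, hk2⟩ := h3
  have hk2' : ι (b (f k)) ∈ U2 := by
    by_contra hc
    exact hk2 hc
  have h4 := hmul _ hk1 _ hk2'
  rw [show mulS (z k) (ι (b (f k))) = ι (someE (x (f k)) * b (f k)) from (hhom _ _).symm,
    hmulb] at h4
  exact hfmem k h4

include hcont hCLP hinj hhom hdense hacyc in
theorem pnc_left (x : ℕ → GISElem src rng) (hxinj : Function.Injective x)
    (b : ℕ → GIS src rng)
    (hmulb : ∀ n, b n * someE (x n) = someE (x n))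
    (hbcof : ∀ U : Set S, IsOpen U → ι 0 ∈ U → {n | ι (b n) ∉ U}.Finite)
    {W : Set S} (hW : IsOpen W) (h0W : ι 0 ∈ W) :
    {n | ι (someE (x n)) ∉ W}.Finite := by
  by_contra hinf
  replace hinf : {n | ι (someE (x n)) ∉ W}.Infinite := hinf
  obtain ⟨f, hfinj, hfmem⟩ := set_infinite_exists_seq hinf
  set z : ℕ → S := fun k => ι (someE (x (f k))) with hzdef
  have hzinj : Function.Injective z := by
    intro a b h
    exact hfinj (hxinj (someE_inj (hinj h)))
  have hziso : ∀ k, IsOpen ({z k} : Set S) :=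
    fun k => isolated_of_ne_zero hcont hinj hhom hdense hacyc (someE_ne_zero _)
  obtain ⟨t, ht⟩ := acc_seq hCLP z hzinj hziso
  have habs : mulS (ι 0) t ∈ W := by
    rw [absorb_left hcont hhom hdense t]; exact h0W
  obtain ⟨U1, U2, hU1, hU2, m1, m2, hmul⟩ := rectHelper hcont hW habs
  have h1 := ht U2 hU2 m2
  have h2 := hbcof U1 hU1 m1
  have h3 : ({k | z k ∈ U2} \ (f ⁻¹' {n | ι (b n) ∉ U1})).Nonempty :=
    (h1.diff (h2.preimage hfinj.injOn)).nonempty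
  obtain ⟨k, hk1, hk2⟩ := h3
  have hk2' : ι (b (f k)) ∈ U1 := by
    by_contra hc
    exact hk2 hc
  have h4 := hmul _ hk2' _ hk1
  rw [show mulS (ι (b (f k))) (z k) = ι (b (f k) * someE (x (f k))) from (hhom _ _).symm,
    hmulb] at h4
  exact hfmem k h4

include hcont hCLP hinj hhom hdense hacyc in
theorem icl {W : Set S} (hW : IsOpen W) (h0W : ι 0 ∈ W) :
    {p : GPath src rng | ι (eIdem p) ∉ W}.Finite := by
  by_contra hinf
  replace hinf : {p : GPath src rng | ι (eIdem p) ∉ W}.Infinite := hinf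
  obtain ⟨q, hqinj, hqmem⟩ := set_infinite_exists_seq hinf
  by_cases hrng : (Set.range (fun n => (q n).range)).Finite
  · -- common range; antichain; ocl
    obtain ⟨wv, hwv⟩ : ∃ wv, {n | (q n).range = wv}.Infinite := by
      obtain ⟨b, hb⟩ := exists_infinite_fiber' (fun n => (q n).range) Set.infinite_univ hrng
      exact ⟨b, hb⟩
    obtain ⟨g, hginj, hgmem⟩ := set_infinite_exists_seq hwv
    have horth : ∀ m n, m ≠ n → eIdem (q (g m)) * eIdem (q (g n)) = (0 : GIS src rng) := by
      intro m n hmn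
      refine eIdem_orth_of_range_eq hacyc ?_ ?_
      · rw [hgmem m, hgmem n]
      · intro hc
        exact hmn (hginj (hqinj hc))
    have hfin := ocl hcont hCLP hinj hhom hdense hacyc (fun n => q (g n))
      (fun a b h => hginj (hqinj h)) horth hW h0W
    have hall : {n | ι (eIdem (q (g n))) ∉ W} = Set.univ :=
      Set.eq_univ_of_forall (fun n => hqmem (g n))
    rw [hall] at hfin
    exact Set.infinite_univ hfin
  · -- infinitely many ranges
    obtain ⟨φ, hφ⟩ : ∃ φ : ℕ → ℕ, Function.Injective (fun n => (q (φ n)).range) := by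
      have hrinf : (Set.range (fun n => (q n).range)).Infinite := hrng
      obtain ⟨r, hrinj, hrmem⟩ := set_infinite_exists_seq hrinf
      choose φ hφ using hrmem
      refine ⟨φ, fun a b h => hrinj ?_⟩
      have ha := hφ a
      have hb := hφ b
      change (q (φ a)).range = r a at ha
      change (q (φ b)).range = r b at hb
      change (q (φ a)).range = (q (φ b)).range at h
      rw [← ha, ← hb, h]
    set q' : ℕ → GPath src rng := fun n => q (φ n) with hq'def
    have hrinj' : Function.Injective (fun n => (q' n).range) := hφ
    have hq'inj : Function.Injective q' := by
      intro a b h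
      exact hrinj' (congrArg GPath.range h)
    -- vertex idempotent family is 0-cofinal
    have hvcof : ∀ U : Set S, IsOpen U → ι 0 ∈ U →
        {n | ι (onePt src rng ((q' n).range)) ∉ U}.Finite := by
      intro U hU h0U
      have := ocl hcont hCLP hinj hhom hdense hacyc
        (fun n => vPath src rng ((q' n).range))
        (fun a b h => hrinj' (congrArg GPath.start h))
        (fun m n hmn => onePt_orth (fun hc => hmn (hrinj' hc)))
        hU h0U
      exact this
    -- row family is 0-cofinal
    have hrowcof : ∀ U : Set S, IsOpen U → ι 0 ∈ U →
        {n | ι (rowE (q' n)) ∉ U}.Finite := by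
      intro U hU h0U
      have := pnc_left hcont hCLP hinj hhom hdense hacyc
        (x := fun n => ⟨(vPath src rng ((q' n).range), q' n), by simp⟩)
        (by
          intro a b h
          have := congrArg (fun e : GISElem src rng => e.1.2) h
          exact hq'inj this)
        (b := fun n => onePt src rng ((q' n).range))
        (fun n => onePt_mul_rowE (q' n))
        hvcof hU h0U
      exact this
    -- column family is 0-cofinal
    have hcolcof : ∀ U : Set S, IsOpen U → ι 0 ∈ U →
        {n | ι (colE (q' n)) ∉ U}.Finite := by
      intro U hU h0U
      have := pnc_right hcont hCLP hinj hhom hdense hacyc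
        (x := fun n => ⟨(q' n, vPath src rng ((q' n).range)), by simp⟩)
        (by
          intro a b h
          have := congrArg (fun e : GISElem src rng => e.1.1) h
          exact hq'inj this)
        (b := fun n => onePt src rng ((q' n).range))
        (fun n => colE_mul_onePt (q' n))
        hvcof hU h0U
      exact this
    -- finale
    have hmem00 : mulS (ι 0) (ι 0) ∈ W := by
      rw [← hhom, GIS.zero_mul]
      exact h0W
    obtain ⟨U1, U2, hU1, hU2, m1, m2, hmul⟩ := rectHelper hcont hW hmem00
    obtain ⟨n, hn⟩ := (Set.Finite.infinite_compl
      ((hcolcof U1 hU1 m1).union (hrowcof U2 hU2 m2))).nonempty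
    simp only [Set.mem_compl_iff, Set.mem_union, Set.mem_setOf_eq, not_or, not_not] at hn
    have h4 := hmul _ hn.1 _ hn.2
    rw [show mulS (ι (colE (q' n))) (ι (rowE (q' n))) = ι (colE (q' n) * rowE (q' n)) from
      (hhom _ _).symm, colE_mul_rowE] at h4
    exact hqmem (φ n) h4

include hcont hCLP hinj hhom hdense hacyc in
theorem goalB {W : Set S} (hW : IsOpen W) (h0W : ι 0 ∈ W) :
    {e : GISElem src rng | ι (someE e) ∉ W}.Finite := by
  by_contra hinf
  replace hinf : {e : GISElem src rng | ι (someE e) ∉ W}.Infinite := hinf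
  obtain ⟨x, hxinj, hxmem⟩ := set_infinite_exists_seq hinf
  by_cases hsnd : (Set.range (fun n => (x n).1.2)).Finite
  · -- common second component; use left idempotents on first components
    obtain ⟨q0, hq0⟩ := exists_infinite_fiber' (fun n => (x n).1.2) Set.infinite_univ hsnd
    obtain ⟨g, hginj, hgmem⟩ := set_infinite_exists_seq hq0
    have hfstinj : Function.Injective (fun n => (x (g n)).1.1) := by
      intro a b h
      change (x (g a)).1.1 = (x (g b)).1.1 at h
      have ha : (x (g a)).1.2 = q0 := hgmem a
      have hb : (x (g b)).1.2 = q0 := hgmem b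
      exact hginj (hxinj (elem_ext h (ha.trans hb.symm)))
    have hfin := pnc_left hcont hCLP hinj hhom hdense hacyc
      (x := fun n => x (g n)) (hxinj.comp hginj)
      (b := fun n => eIdem ((x (g n)).1.1))
      (fun n => eIdem_fst_mul (x (g n)))
      (fun U hU h0U => by
        have h1 := icl hcont hCLP hinj hhom hdense hacyc hU h0U
        have h2 : {n | ι (eIdem ((x (g n)).1.1)) ∉ U} =
            (fun n => (x (g n)).1.1) ⁻¹' {p | ι (eIdem p) ∉ U} := rfl
        rw [h2]
        exact h1.preimage hfstinj.injOn)
      hW h0W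
    have hall : {n | ι (someE (x (g n))) ∉ W} = Set.univ :=
      Set.eq_univ_of_forall (fun n => hxmem (g n))
    rw [hall] at hfin
    exact Set.infinite_univ hfin
  · -- infinitely many second components
    obtain ⟨φ, hφ⟩ : ∃ φ : ℕ → ℕ, Function.Injective (fun n => (x (φ n)).1.2) := by
      have hrinf : (Set.range (fun n => (x n).1.2)).Infinite := hsnd
      obtain ⟨r, hrinj, hrmem⟩ := set_infinite_exists_seq hrinf
      choose φ hφ using hrmem
      refine ⟨φ, fun a b h => hrinj ?_⟩
      have ha := hφ a
      have hb := hφ b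
      change (x (φ a)).1.2 = r a at ha
      change (x (φ b)).1.2 = r b at hb
      change (x (φ a)).1.2 = (x (φ b)).1.2 at h
      rw [← ha, ← hb, h]
    have hxφinj : Function.Injective (x ∘ φ) := by
      intro a b h
      exact hφ (congrArg (fun e : GISElem src rng => e.1.2) h)
    have hfin := pnc_right hcont hCLP hinj hhom hdense hacyc
      (x := fun n => x (φ n)) hxφinj
      (b := fun n => eIdem ((x (φ n)).1.2))
      (fun n => mul_eIdem_snd (x (φ n)))
      (fun U hU h0U => by
        have h1 := icl hcont hCLP hinj hhom hdense hacyc hU h0U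
        have h2 : {n | ι (eIdem ((x (φ n)).1.2)) ∉ U} =
            (fun n => (x (φ n)).1.2) ⁻¹' {p | ι (eIdem p) ∉ U} := rfl
        rw [h2]
        exact h1.preimage hφ.injOn)
      hW h0W
    have hall : {n | ι (someE (x (φ n))) ∉ W} = Set.univ :=
      Set.eq_univ_of_forall (fun n => hxmem (φ n))
    rw [hall] at hfin
    exact Set.infinite_univ hfin

include hcont hCLP hinj hhom hdense hacyc in
theorem surj_main : Function.Surjective ι := by
  intro s
  by_contra hs
  push_neg at hs
  have hsr : s ∉ Set.range ι := by rintro ⟨g, rfl⟩; exact hs g rfl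
  have hop : ¬ IsOpen ({s} : Set S) := by
    intro hop
    obtain ⟨g, hg⟩ := hdense.exists_mem_open hop ⟨s, rfl⟩
    exact hsr ⟨g, hg⟩
  have hne : s ≠ ι 0 := fun hc => hsr ⟨0, hc.symm⟩
  obtain ⟨P, Q, hP, hQ, hsP, h0Q, hdisj⟩ := t2_separation hne
  have htr := infinite_trace hdense hop hP hsP
  have hpre : (ι ⁻¹' P).Infinite :=
    (htr.preimage Set.inter_subset_right).mono (fun g hg => hg.1)
  apply hpre
  have hsub : ι ⁻¹' P ⊆ someE '' {e : GISElem src rng | ι (someE e) ∉ Q} := by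
    intro g hg
    cases g with
    | none => exact absurd h0Q (Set.disjoint_left.mp hdisj hg)
    | some e => exact ⟨e, fun hc => Set.disjoint_left.mp hdisj hg hc, rfl⟩
  exact ((goalB hcont hCLP hinj hhom hdense hacyc hQ h0Q).image someE).subset hsub

include hcont hCLP hinj hhom hdense hacyc in
theorem induced_eq : TopologicalSpace.induced ι tS = tauC (GIS src rng) := by
  apply TopologicalSpace.ext
  funext U
  apply propext
  constructor
  · rintro ⟨O, hO, rfl⟩
    show (0 : GIS src rng) ∈ ι ⁻¹' O → (ι ⁻¹' O)ᶜ.Finite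
    intro h0
    refine ((goalB hcont hCLP hinj hhom hdense hacyc hO h0).image someE).subset ?_
    intro g hg
    cases g with
    | none => exact absurd h0 hg
    | some e => exact ⟨e, hg, rfl⟩
  · intro hU
    show ∃ O, IsOpen O ∧ ι ⁻¹' O = U
    by_cases h0 : (0 : GIS src rng) ∈ U
    · refine ⟨(ι '' Uᶜ)ᶜ, ?_, ?_⟩
      · rw [isOpen_compl_iff]
        exact ((hU h0).image ι).isClosed
      · rw [Set.preimage_compl, Function.Injective.preimage_image hinj, compl_compl]
    · refine ⟨ι '' U, ?_, Function.Injective.preimage_image hinj U⟩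
      have hrw : ι '' U = ⋃ g ∈ U, {ι g} := by
        ext y
        simp only [Set.mem_image, Set.mem_iUnion, Set.mem_singleton_iff]
        exact ⟨fun ⟨g, hg, hgy⟩ => ⟨g, hg, hgy.symm⟩, fun ⟨g, hg, hgy⟩ => ⟨g, hg, hgy.symm⟩⟩
      rw [hrw]
      apply isOpen_biUnion
      intro g hgU
      cases g with
      | none => exact absurd hgU h0
      | some e => exact isolated_nonzero hcont hinj hhom hdense hacyc e

include hcont hCLP hinj hhom hdense hacyc in
theorem compact_main : CompactSpace S := by
  classical
  constructor
  apply isCompact_of_finite_subcover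
  intro idx U hUopen hcover
  have h0 : ι 0 ∈ ⋃ i, U i := hcover (Set.mem_univ _)
  obtain ⟨i0, h0i⟩ := Set.mem_iUnion.mp h0
  have hfin := goalB hcont hCLP hinj hhom hdense hacyc (hUopen i0) h0i
  have hch : ∀ e : GISElem src rng, ∃ i, ι (someE e) ∈ U i := by
    intro e
    exact Set.mem_iUnion.mp (hcover (Set.mem_univ _))
  choose fidx hfidx using hch
  refine ⟨insert i0 (hfin.toFinset.image fidx), ?_⟩
  intro s _
  obtain ⟨g, rfl⟩ := surj_main hcont hCLP hinj hhom hdense hacyc s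
  by_cases hm : ι g ∈ U i0
  · exact Set.mem_biUnion (Finset.mem_insert_self _ _) hm
  · cases g with
    | none => exact absurd h0i hm
    | some e =>
      have he : e ∈ {e : GISElem src rng | ι (someE e) ∉ U i0} := hm
      refine Set.mem_biUnion ?_ (hfidx e)
      exact Finset.mem_insert_of_mem (Finset.mem_image_of_mem _ (hfin.mem_toFinset.mpr he))

end Topo

/-! ### facts about `tauC` -/

theorem tauC_isOpen_iff {α : Type*} [Zero α] (U : Set α) :
    @IsOpen α (tauC α) U ↔ ((0 : α) ∈ U → Uᶜ.Finite) := Iff.rfl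

theorem tauC_t2 (α : Type*) [Zero α] : @T2Space α (tauC α) := by
  letI := tauC α
  constructor
  intro x y hxy
  by_cases hx : x = 0
  · subst hx
    refine ⟨{y}ᶜ, {y}, ?_, ?_, fun h => hxy h, rfl, disjoint_compl_left⟩
    · intro _
      rw [compl_compl]
      exact Set.finite_singleton y
    · intro h0
      exact absurd h0 hxy
  · refine ⟨{x}, {x}ᶜ, ?_, ?_, rfl, fun h => hxy h.symm, disjoint_compl_right⟩
    · intro h0
      exact absurd h0.symm hx
    · intro _
      rw [compl_compl]
      exact Set.finite_singleton x

theorem tauC_clp (α : Type*) [Zero α] : @CLPCompact α (tauC α) := by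
  letI := tauC α
  intro 𝒰 hclopen hcover
  have h0 : (0 : α) ∈ ⋃₀ 𝒰 := hcover ▸ Set.mem_univ 0
  obtain ⟨U0, hU0mem, h0U0⟩ := h0
  have hU0fin : U0ᶜ.Finite := (hclopen U0 hU0mem).2 h0U0
  have hch : ∀ x ∈ U0ᶜ, ∃ U ∈ 𝒰, x ∈ U := by
    intro x _
    have : x ∈ ⋃₀ 𝒰 := hcover ▸ Set.mem_univ x
    exact this
  choose! f hf1 hf2 using hch
  refine ⟨insert U0 (f '' U0ᶜ), ?_, ?_, ?_⟩
  · rintro U (rfl | ⟨x, hx, rfl⟩)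
    · exact hU0mem
    · exact hf1 x hx
  · exact (hU0fin.image f).insert U0
  · apply Set.eq_univ_of_forall
    intro x
    by_cases hx : x ∈ U0
    · exact ⟨U0, Set.mem_insert _ _, hx⟩
    · exact ⟨f x, Set.mem_insert_of_mem _ ⟨x, hx, rfl⟩, hf2 x hx⟩

end GISPaper

open GISPaper in
/-- Let `E` be an acyclic graph. Then `G(E)` embeds densely into some
Hausdorff CLP-compact topological semigroup iff the multiplication of `G(E)` is
jointly continuous w.r.t. `τ_c`; moreover, every Hausdorff CLP-compact topological
semigroup containing `G(E)` densely equals `G(E)` with the topology `τ_c` (the dense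
embedding is onto and induces `τ_c`) and is compact. -/
theorem statement9 {V E : Type u} (src rng : E → V)
    (hacyc : ∀ p : GPath src rng, p.edges ≠ [] → p.start ≠ p.range) :
    ((∃ (S : Type u) (tS : TopologicalSpace S) (mulS : S → S → S),
        (∀ a b c : S, mulS (mulS a b) c = mulS a (mulS b c)) ∧
        @T2Space S tS ∧
        @Continuous _ _ (@instTopologicalSpaceProd S S tS tS) tS
          (fun p : S × S => mulS p.1 p.2) ∧
        @CLPCompact S tS ∧
        ∃ ι : GIS src rng → S, Function.Injective ι ∧
          (∀ x y : GIS src rng, ι (x * y) = mulS (ι x) (ι y)) ∧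
          @DenseRange S tS _ ι) ↔
      @Continuous _ _
        (@instTopologicalSpaceProd _ _ (tauC (GIS src rng)) (tauC (GIS src rng)))
        (tauC (GIS src rng)) (fun p : GIS src rng × GIS src rng => p.1 * p.2)) ∧
    (∀ (S : Type u) (tS : TopologicalSpace S) (mulS : S → S → S),
      (∀ a b c : S, mulS (mulS a b) c = mulS a (mulS b c)) →
      @T2Space S tS →
      @Continuous _ _ (@instTopologicalSpaceProd S S tS tS) tS
        (fun p : S × S => mulS p.1 p.2) →
      @CLPCompact S tS →
      ∀ ι : GIS src rng → S, Function.Injective ι →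
        (∀ x y : GIS src rng, ι (x * y) = mulS (ι x) (ι y)) →
        @DenseRange S tS _ ι →
        Function.Surjective ι ∧
        TopologicalSpace.induced ι tS = tauC (GIS src rng) ∧
        @CompactSpace S tS) := by
  have part2 : ∀ (S : Type u) (tS : TopologicalSpace S) (mulS : S → S → S),
      (∀ a b c : S, mulS (mulS a b) c = mulS a (mulS b c)) →
      @T2Space S tS →
      @Continuous _ _ (@instTopologicalSpaceProd S S tS tS) tS
        (fun p : S × S => mulS p.1 p.2) →
      @CLPCompact S tS →
      ∀ ι : GIS src rng → S, Function.Injective ι →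
        (∀ x y : GIS src rng, ι (x * y) = mulS (ι x) (ι y)) →
        @DenseRange S tS _ ι →
        Function.Surjective ι ∧
        TopologicalSpace.induced ι tS = tauC (GIS src rng) ∧
        @CompactSpace S tS := by
    intro S tS mulS _hassoc hT2 hcont hCLP ι hinj hhom hdense
    letI := tS
    haveI := hT2
    exact ⟨surj_main hcont hCLP hinj hhom hdense hacyc,
      induced_eq hcont hCLP hinj hhom hdense hacyc,
      compact_main hcont hCLP hinj hhom hdense hacyc⟩
  refine ⟨⟨?_, ?_⟩, part2⟩
  · rintro ⟨S, tS, mulS, hassoc, hT2, hcont, hCLP, ι, hinj, hhom, hdense⟩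
    obtain ⟨hsurj, hind, _⟩ := part2 S tS mulS hassoc hT2 hcont hCLP ι hinj hhom hdense
    letI := tS
    haveI := hT2
    have hcontG : @Continuous _ _
        (@instTopologicalSpaceProd _ _ (TopologicalSpace.induced ι tS)
          (TopologicalSpace.induced ι tS))
        (TopologicalSpace.induced ι tS)
        (fun p : GIS src rng × GIS src rng => p.1 * p.2) := by
      letI tG : TopologicalSpace (GIS src rng) := TopologicalSpace.induced ι tS
      refine continuous_induced_rng.2 ?_
      show Continuous fun p : GIS src rng × GIS src rng => ι (p.1 * p.2)
      have heq : (fun p : GIS src rng × GIS src rng => ι (p.1 * p.2)) =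
          (fun p : S × S => mulS p.1 p.2) ∘ (Prod.map ι ι) := by
        funext p
        exact hhom p.1 p.2
      rw [heq]
      exact hcont.comp (continuous_induced_dom.prodMap continuous_induced_dom)
    rw [hind] at hcontG
    exact hcontG
  · intro hcontτ
    exact ⟨GIS src rng, tauC _, fun a b => a * b, mul_assoc', tauC_t2 _, hcontτ, tauC_clp _,
      id, Function.injective_id, fun x y => rfl, @denseRange_id _ (tauC (GIS src rng))⟩
end

section
/- Let τ be a Hausdorff topology on G(T) making the multiplication separately continuous. If there exists k ∈ ℕ such that 0 is not an accumulation point of the set L_k* = {(k,k,m) : m ≥ k}, then for every n ∈ ℕ, 0 is not an accumulation point of L_n*. -/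
namespace GISPaper

/-- The nonzero elements of the graph inverse semigroup `G(T)` over the unary tree `T`:
the triple `(n, k, m)` with `n ≤ m` and `k ≤ m` represents the element `(n,m)(k,m)⁻¹`,
where `(i,j)` is the unique path of `T` from `i` to `j`. -/
def GTElem : Type := {t : ℕ × ℕ × ℕ // t.1 ≤ t.2.2 ∧ t.2.1 ≤ t.2.2}

/-- The graph inverse semigroup over the unary tree (zero is `none`). -/
def GT : Type := Option GTElem

instance : Zero GT := ⟨(none : Option GTElem)⟩

/-- Multiplication of `G(T)`: `(n,k,m)·(n',k',m') = (n,k',max m m')` if `k = n'`,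
and `0` otherwise; `0` is absorbing. -/
def GT.mul : Option GTElem → Option GTElem → Option GTElem
  | some ⟨(n, k, m), h⟩, some ⟨(n', k', m'), h'⟩ =>
    if k = n' then
      some ⟨(n, k', max m m'),
        ⟨le_trans h.1 (le_max_left m m'), le_trans h'.2 (le_max_right m m')⟩⟩
    else none
  | _, _ => none

instance : Mul GT := ⟨GT.mul⟩

/-- `L_n^* = {(n,n,m) : m ≥ n}`, the maximal chain of nonzero idempotents at `n`. -/
def Lstar (n : ℕ) : Set GT :=
  {x | ∃ p : GTElem, x = some p ∧ p.1.1 = n ∧ p.1.2.1 = n}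

/-- `L_n = L_n^* ∪ {0}`. -/
def L (n : ℕ) : Set GT := insert 0 (Lstar n)

end GISPaper

open GISPaper in
/-- Let `τ` be a Hausdorff topology on `G(T)` making the multiplication
separately continuous. If `0` is not an accumulation point of `L_k^*` for some `k`,
then `0` is not an accumulation point of `L_n^*` for every `n`. -/
theorem statement13 (τ : TopologicalSpace GT) (hT2 : @T2Space GT τ)
    (hsep : ∀ a : GT,
      @Continuous _ _ τ τ (fun x => a * x) ∧ @Continuous _ _ τ τ (fun x => x * a))
    (k : ℕ) (hk : ¬ @AccPt GT τ 0 (Filter.principal (Lstar k))) :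
    ∀ n : ℕ, ¬ @AccPt GT τ 0 (Filter.principal (Lstar n)) := by
  letI : TopologicalSpace GT := τ
  intro n hn
  rw [accPt_iff_nhds] at hn hk
  push_neg at hk
  obtain ⟨U, hU, hU0⟩ := hk
  set a : GT := some ⟨(k, n, max k n), le_max_left _ _, le_max_right _ _⟩ with ha
  set b : GT := some ⟨(n, k, max k n), le_max_right _ _, le_max_left _ _⟩ with hb
  have hf : Continuous (fun x : GT => a * (x * b)) :=
    (hsep a).1.comp (hsep b).2
  have hV : (fun x : GT => a * (x * b)) ⁻¹' U ∈ nhds (0 : GT) :=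
    hf.continuousAt (x := (0 : GT)) hU
  obtain ⟨y, ⟨hyV, hyL⟩, hy0⟩ := hn _ hV
  obtain ⟨⟨⟨n₁, k₁, m₁⟩, hm⟩, hyq, h1, h2⟩ := hyL
  dsimp at h1 h2
  have hval : a * (y * b)
      = some ⟨(k, k, max (max k n) (max m₁ (max k n))),
          by dsimp only; omega, by dsimp only; omega⟩ := by
    show GT.mul a (GT.mul y b) = _
    rw [ha, hb, hyq]
    simp [GT.mul, h1, h2]
  have hmem : a * (y * b) ∈ U := hyV
  have := hU0 _ ⟨hmem, ⟨_, hval, rfl, rfl⟩⟩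
  rw [hval] at this
  exact Option.some_ne_none _ this
end

section
/- Let G(T) be a dense subsemigroup of a Hausdorff CLP-compact topological semigroup S. Then for every open neighborhood U of 0 in S there exists n ∈ ℕ such that L_k ⊆ U for every k > n. -/
namespace GISPaper

def st14some (p : GTElem) : GT := some p

theorem st14_zero_mul (x : GT) : (0 : GT) * x = 0 := by
  show GT.mul none x = none
  cases x <;> rfl

theorem st14_mul_zero (x : GT) : x * (0 : GT) = 0 := by
  show GT.mul x none = none
  cases x <;> rfl

theorem st14_some_mul_some (p q : GTElem) :
    st14some p * st14some q =
      if p.1.2.1 = q.1.1 then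
        st14some ⟨(p.1.1, q.1.2.1, max p.1.2.2 q.1.2.2),
          le_trans p.2.1 (le_max_left _ _), le_trans q.2.2 (le_max_right _ _)⟩
      else 0 := by
  obtain ⟨⟨n, k, m⟩, h⟩ := p
  obtain ⟨⟨n', k', m'⟩, h'⟩ := q
  rfl

def st14El (k m : ℕ) (h : k ≤ m) : GT := st14some ⟨(k, k, m), h, h⟩

theorem st14_el_congr {k m m' : ℕ} {h : k ≤ m} {h' : k ≤ m'} (e : m = m') :
    st14El k m h = st14El k m' h' := by subst e; rfl

theorem st14_el_mul_el (k m m' : ℕ) (h : k ≤ m) (h' : k ≤ m') :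
    st14El k m h * st14El k m' h' = st14El k (max m m') (le_trans h (le_max_left _ _)) := by
  show st14some ⟨(k,k,m),h,h⟩ * st14some ⟨(k,k,m'),h',h'⟩ = _
  refine (st14_some_mul_some _ _).trans ?_
  exact if_pos rfl

theorem st14_el_mul_el_ne {k k' : ℕ} (m m' : ℕ) (h : k ≤ m) (h' : k' ≤ m') (hne : k ≠ k') :
    st14El k m h * st14El k' m' h' = 0 := by
  show st14some ⟨(k,k,m),h,h⟩ * st14some ⟨(k',k',m'),h',h'⟩ = _
  refine (st14_some_mul_some _ _).trans ?_
  exact if_neg hne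

theorem st14_el_inj {k m k' m' : ℕ} {h : k ≤ m} {h' : k' ≤ m'}
    (heq : st14El k m h = st14El k' m' h') : k = k' ∧ m = m' := by
  have h2 : ((k, k, m) : ℕ × ℕ × ℕ) = (k', k', m') :=
    congrArg Subtype.val (Option.some.inj heq)
  simp only [Prod.mk.injEq] at h2
  exact ⟨h2.1, h2.2.2⟩

theorem st14_core (k M n k₁ m : ℕ) (hkM : k ≤ M) (hp : n ≤ m ∧ k₁ ≤ m) :
    st14El k M hkM * st14some ⟨(n, k₁, m), hp⟩ * st14El k M hkM =
      if k = n ∧ k₁ = k then st14El k (max M m) (le_trans hkM (le_max_left M m)) else 0 := by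
  by_cases hn : k = n
  · subst hn
    have h1 : st14El k M hkM * st14some ⟨(k, k₁, m), hp⟩ =
        st14some ⟨(k, k₁, max M m), le_trans hkM (le_max_left _ _),
          le_trans hp.2 (le_max_right _ _)⟩ := by
      show st14some ⟨(k,k,M),hkM,hkM⟩ * st14some ⟨(k,k₁,m),hp⟩ = _
      refine (st14_some_mul_some _ _).trans ?_
      exact if_pos rfl
    rw [h1]
    by_cases hk₁ : k₁ = k
    · subst hk₁
      rw [if_pos ⟨rfl, rfl⟩]
      show st14some ⟨(k₁,k₁,max M m), le_trans hkM (le_max_left _ _), le_trans hkM (le_max_left _ _)⟩ * st14some ⟨(k₁,k₁,M),hkM,hkM⟩ = _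
      refine (st14_some_mul_some _ _).trans ?_; rw [if_pos rfl]
      exact congrArg st14some (Subtype.ext (by
        show ((k₁, k₁, max (max M m) M) : ℕ × ℕ × ℕ) = (k₁, k₁, max M m)
        rw [max_eq_left (le_max_left M m)]))
    · rw [if_neg (fun hc => hk₁ hc.2)]
      show st14some ⟨(k,k₁,max M m), le_trans hkM (le_max_left _ _), le_trans hp.2 (le_max_right _ _)⟩ * st14some ⟨(k,k,M),hkM,hkM⟩ = (0 : GT)
      refine (st14_some_mul_some _ _).trans ?_
      exact if_neg hk₁
  · rw [if_neg (fun hc => hn hc.1)]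
    have h1 : st14El k M hkM * st14some ⟨(n, k₁, m), hp⟩ = 0 := by
      show st14some ⟨(k,k,M),hkM,hkM⟩ * st14some ⟨(n,k₁,m),hp⟩ = (0:GT)
      refine (st14_some_mul_some _ _).trans ?_
      exact if_neg hn
    rw [h1, st14_zero_mul]

theorem st14_cases (k M : ℕ) (hkM : k ≤ M) (x : GT) :
    st14El k M hkM * x * st14El k M hkM = 0 ∨
      (∃ (m : ℕ) (hm : k ≤ m), M < m ∧ st14El k M hkM * x * st14El k M hkM = st14El k m hm) ∨
      (st14El k M hkM * x * st14El k M hkM = st14El k M hkM ∧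
        ∃ (m : ℕ) (hm : k ≤ m), m ≤ M ∧ x = st14El k m hm) := by
  rcases x with _ | ⟨⟨n, k₁, m⟩, hp⟩
  · left
    show st14El k M hkM * (0 : GT) * st14El k M hkM = 0
    rw [st14_mul_zero, st14_zero_mul]
  · have hx : (some ⟨(n, k₁, m), hp⟩ : Option GTElem) = st14some ⟨(n, k₁, m), hp⟩ := rfl
    rw [hx, st14_core k M n k₁ m hkM hp]
    by_cases hc : k = n ∧ k₁ = k
    · rw [if_pos hc]
      rcases Nat.lt_or_ge M m with h | h
      · right; left
        exact ⟨max M m, le_trans hkM (le_max_left M m), lt_max_iff.mpr (Or.inr h), rfl⟩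
      · right; right
        refine ⟨st14_el_congr (max_eq_left h), m, ?_, h, ?_⟩
        · exact hc.1 ▸ hp.1
        · obtain ⟨h1, h2⟩ := hc
          subst h1; subst h2
          rfl
    · rw [if_neg hc]; left; rfl

end GISPaper

open GISPaper in
/-- Let `G(T)` be a dense subsemigroup of a Hausdorff CLP-compact
topological semigroup `S`. Then for every open neighborhood `U` of `0` in `S` there
is `n` such that `L_k ⊆ U` for every `k > n`. -/
theorem statement14 {S : Type*} [TopologicalSpace S] [T2Space S] [Mul S]
    (hassoc : ∀ a b c : S, a * b * c = a * (b * c))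
    (hSmul : Continuous (fun p : S × S => p.1 * p.2))
    (hCLP : CLPCompact S)
    (ι : GT → S) (hinj : Function.Injective ι)
    (hhom : ∀ x y : GT, ι (x * y) = ι x * ι y)
    (hdense : DenseRange ι) :
    ∀ U : Set S, IsOpen U → ι 0 ∈ U →
      ∃ n : ℕ, ∀ k : ℕ, k > n → ι '' L k ⊆ U := by
  intro U hU hU0
  by_contra hcon
  push_neg at hcon
  -- continuity of translations
  have hmul_left : ∀ b : S, Continuous fun u => b * u := fun b =>
    hSmul.comp (continuous_const.prodMk continuous_id)
  have hmul_right : ∀ b : S, Continuous fun u => u * b := fun b =>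
    hSmul.comp (continuous_id.prodMk continuous_const)
  -- extract witnesses
  have H : ∀ n, ∃ k, n < k ∧ ∃ m, ∃ h : k ≤ m, ι (st14El k m h) ∉ U := by
    intro n
    obtain ⟨k, hk, hns⟩ := hcon n
    obtain ⟨y, hyL, hyU⟩ := Set.not_subset.mp hns
    obtain ⟨x, hx, rfl⟩ := hyL
    rcases Set.mem_insert_iff.mp hx with rfl | ⟨p, rfl, h1, h2⟩
    · exact absurd hU0 hyU
    · refine ⟨k, hk, p.1.2.2, h1 ▸ p.2.1, ?_⟩
      have hps : some p = st14El k p.1.2.2 (h1 ▸ p.2.1) := by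
        show _ = st14some _
        unfold st14some
        congr 1
        apply Subtype.ext
        show p.1 = (k, k, p.1.2.2)
        calc p.1 = (p.1.1, p.1.2.1, p.1.2.2) := rfl
          _ = (k, k, p.1.2.2) := by rw [h1, h2]
      rwa [← hps]
  choose kf hkf mf hmf hmU using H
  -- strictly increasing sequence of indices
  let K : ℕ → ℕ := fun i => Nat.rec 0 (fun _ prev => kf prev) i
  let ki : ℕ → ℕ := fun i => kf (K i)
  have hkmono : StrictMono ki := strictMono_nat_of_lt_succ fun i => hkf (K (i + 1))
  let mi : ℕ → ℕ := fun i => mf (K i)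
  have hkimi : ∀ i, ki i ≤ mi i := fun i => hmf (K i)
  let e : ℕ → GT := fun i => st14El (ki i) (mi i) (hkimi i)
  let s : ℕ → S := fun i => ι (e i)
  have hsU : ∀ i, s i ∉ U := fun i => hmU (K i)
  -- algebraic facts
  have hee : ∀ i, e i * e i = e i := fun i => by
    show st14El _ _ _ * st14El _ _ _ = st14El _ _ _
    rw [st14_el_mul_el]
    exact st14_el_congr (max_self _)
  have heij : ∀ i j, i ≠ j → e i * e j = 0 := fun i j hij =>
    st14_el_mul_el_ne _ _ _ _ (fun h => hij (hkmono.injective h))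
  have hsij : ∀ i j, i ≠ j → s i * s j = ι 0 := fun i j hij => by
    show ι (e i) * ι (e j) = ι 0
    rw [← hhom, heij i j hij]
  have hsii : ∀ i, s i * s i = s i := fun i => by
    show ι (e i) * ι (e i) = ι (e i)
    rw [← hhom, hee i]
  have hs_inj : Function.Injective s := fun i j h => by
    have h2 : e i = e j := hinj h
    exact hkmono.injective (st14_el_inj h2).1
  -- each s i is isolated
  have hiso : ∀ i, IsOpen ({s i} : Set S) := by
    intro i
    set k := ki i with hk
    set M := mi i with hM
    have hkM : k ≤ M := hkimi i
    set a : S := s i with ha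
    have hae : a = ι (st14El k M hkM) := rfl
    set c : S := ι (st14El k (M + 1) (le_trans hkM (Nat.le_succ M))) with hc
    set f : S → S := fun u => a * u * a with hfdef
    have hfc : Continuous f := (hmul_right a).comp (hmul_left a)
    set Ecl : Set S := {u | u * c = u} with hEdef
    have hEclosed : IsClosed Ecl := isClosed_eq (hmul_right c) continuous_id
    have haE : a ∉ Ecl := by
      intro hmem
      have h1 : a * c = ι (st14El k (M + 1) (le_trans hkM (Nat.le_succ M))) := by
        rw [hae, ← hhom]
        congr 1
        rw [st14_el_mul_el]
        exact st14_el_congr (max_eq_right (Nat.le_succ M))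
      have h2 : a * c = a := hmem
      rw [h1, hae] at h2
      have h3 := (st14_el_inj (hinj h2)).2
      omega
    have hfx : ∀ x : GT, f (ι x) = ι (st14El k M hkM * x * st14El k M hkM) := by
      intro x
      show a * ι x * a = _
      rw [hae, hhom, hhom]
    have himg : ∀ u, u ∈ Set.range ι → f u ∈ Ecl ∪ {a} := by
      rintro - ⟨x, rfl⟩
      rcases st14_cases k M hkM x with h0 | ⟨m, hm, hMm, hEq⟩ | ⟨hEq, -⟩
      · left
        show f (ι x) * c = f (ι x)
        rw [hfx, h0, ← hhom, st14_zero_mul]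
      · left
        show f (ι x) * c = f (ι x)
        rw [hfx, hEq, ← hhom, st14_el_mul_el]
        exact congrArg ι (st14_el_congr (max_eq_left hMm))
      · right
        show f (ι x) = a
        rw [hfx, hEq, ← hae]
    have hfS : ∀ u : S, f u ∈ Ecl ∪ {a} := by
      intro u
      have h1 : f u ∈ closure (f '' Set.range ι) :=
        image_closure_subset_closure_image hfc ⟨u, hdense u, rfl⟩
      have h2 : closure (f '' Set.range ι) ⊆ Ecl ∪ {a} :=
        closure_minimal (by rintro - ⟨v, hv, rfl⟩; exact himg v hv)
          (hEclosed.union isClosed_singleton)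
      exact h2 h1
    set C : Set S := f ⁻¹' {a} with hCdef
    have hCopen : IsOpen C := by
      have hCeq : C = (f ⁻¹' Ecl)ᶜ := by
        ext u
        simp only [hCdef, Set.mem_preimage, Set.mem_singleton_iff, Set.mem_compl_iff]
        constructor
        · intro h hE
          rw [h] at hE
          exact haE hE
        · intro h
          rcases hfS u with h' | h'
          · exact absurd h' h
          · exact h'
      rw [hCeq]
      exact (hEclosed.preimage hfc).isOpen_compl
    have haC : a ∈ C := by
      show f a = a
      show a * a * a = a
      rw [hae, ← hhom, ← hhom]
      congr 1
      have := hee i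
      show st14El _ _ _ * st14El _ _ _ * st14El _ _ _ = st14El _ _ _
      rw [st14_el_mul_el, st14_el_mul_el]
      exact st14_el_congr (by simp)
    have hCfin : C.Finite := by
      set g : ℕ → S := fun m => if h : k ≤ m then ι (st14El k m h) else ι 0 with hg
      have hBfin : ((g '' Set.Iic M)).Finite := (Set.finite_Iic M).image g
      have hsub : C ∩ Set.range ι ⊆ g '' Set.Iic M := by
        rintro u ⟨huC, x, rfl⟩
        have h1 : f (ι x) = a := huC
        rw [hfx, hae] at h1
        have h2 := hinj h1
        rcases st14_cases k M hkM x with h0 | ⟨m, hm, hMm, hEq⟩ | ⟨-, m, hm, hmM, hxe⟩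
        · rw [h0] at h2
          exact absurd (show (none : Option GTElem) = some _ from h2).symm (Option.some_ne_none _)
        · rw [hEq] at h2
          have := (st14_el_inj h2).2
          omega
        · refine ⟨m, hmM, ?_⟩
          rw [hg]
          simp only
          rw [dif_pos hm, hxe]
      have hucl : C ⊆ closure (C ∩ Set.range ι) := by
        intro u hu
        rw [mem_closure_iff]
        intro O hO hOu
        obtain ⟨v, hv1, hv2⟩ := hdense.inter_open_nonempty (O ∩ C) (hO.inter hCopen) ⟨u, hOu, hu⟩
        exact ⟨v, hv1.1, hv1.2, hv2⟩
      have hcl : closure (C ∩ Set.range ι) ⊆ g '' Set.Iic M :=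
        closure_minimal hsub hBfin.isClosed
      exact hBfin.subset (fun u hu => hcl (hucl hu))
    have hsing : ({a} : Set S) = C ∩ (C \ {a})ᶜ := by
      ext u
      simp only [Set.mem_singleton_iff, Set.mem_inter_iff, Set.mem_compl_iff, Set.mem_diff,
        Set.mem_singleton_iff, not_and, not_not]
      constructor
      · rintro rfl
        exact ⟨haC, fun _ => rfl⟩
      · rintro ⟨h1, h2⟩
        exact h2 h1
    rw [show ({s i} : Set S) = {a} from rfl, hsing]
    exact hCopen.inter (((hCfin.subset Set.diff_subset).isClosed).isOpen_compl)
  -- the set A of witnesses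
  set A : Set S := Set.range s with hA
  have hsmem : ∀ i, s i ∈ A := fun i => ⟨i, rfl⟩
  have hAopen : IsOpen A := by
    have : A = ⋃ i, ({s i} : Set S) := by
      ext u
      simp [hA, eq_comm]
    rw [this]
    exact isOpen_iUnion hiso
  have hAclosed : IsClosed A := by
    apply isClosed_of_closure_subset
    intro x hx
    by_contra hxA
    have h1 : ∀ i, s i * x = ι 0 := by
      intro i
      have hxcl : x ∈ closure (A \ {s i}) := by
        have hsub : A ⊆ (A \ {s i}) ∪ {s i} := by
          intro u hu
          by_cases h : u = s i
          · exact Or.inr h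
          · exact Or.inl ⟨hu, h⟩
        have h2 := closure_mono hsub hx
        rw [closure_union, IsClosed.closure_eq isClosed_singleton] at h2
        rcases h2 with h2 | h2
        · exact h2
        · rw [Set.mem_singleton_iff] at h2
          exact absurd (h2 ▸ hsmem i) hxA
      have himg2 : (fun u => s i * u) '' (A \ {s i}) ⊆ {ι 0} := by
        rintro - ⟨u, ⟨⟨j, rfl⟩, hne⟩, rfl⟩
        have hij : i ≠ j := by
          intro h
          exact hne (by rw [h]; rfl)
        exact hsij i j hij
      have h3 := image_closure_subset_closure_image (hmul_left (s i)) ⟨x, hxcl, rfl⟩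
      exact (closure_minimal himg2 isClosed_singleton) h3
    have h2 : x * x = ι 0 := by
      have himg3 : (fun u => u * x) '' A ⊆ {ι 0} := by
        rintro - ⟨u, ⟨j, rfl⟩, rfl⟩
        exact h1 j
      have h3 := image_closure_subset_closure_image (hmul_right x) ⟨x, hx, rfl⟩
      exact (closure_minimal himg3 isClosed_singleton) h3
    have hxxU : x * x ∈ U := by rw [h2]; exact hU0
    have hpre : IsOpen ((fun p : S × S => p.1 * p.2) ⁻¹' U) := hU.preimage hSmul
    obtain ⟨N₁, N₂, hN₁, hN₂, hx₁, hx₂, hNsub⟩ := isOpen_prod_iff.mp hpre x x hxxU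
    obtain ⟨u, huN, huA⟩ := mem_closure_iff.mp hx (N₁ ∩ N₂) (hN₁.inter hN₂) ⟨hx₁, hx₂⟩
    obtain ⟨j, rfl⟩ := huA
    have h4 : s j * s j ∈ U := hNsub (show (s j, s j) ∈ N₁ ×ˢ N₂ from ⟨huN.1, huN.2⟩)
    rw [hsii j] at h4
    exact hsU j h4
  -- CLP contradiction
  set 𝒰 : Set (Set S) := insert Aᶜ (Set.range fun i => ({s i} : Set S)) with h𝒰
  have hclopen : ∀ C ∈ 𝒰, IsClopen C := by
    rintro C hC
    rcases Set.mem_insert_iff.mp hC with rfl | ⟨i, rfl⟩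
    · exact ⟨hAopen.isClosed_compl, hAclosed.isOpen_compl⟩
    · exact ⟨isClosed_singleton, hiso i⟩
  have hcover : ⋃₀ 𝒰 = Set.univ := by
    ext u
    simp only [Set.mem_sUnion, Set.mem_univ, iff_true]
    by_cases hu : u ∈ A
    · obtain ⟨i, rfl⟩ := hu
      exact ⟨{s i}, Set.mem_insert_of_mem _ ⟨i, rfl⟩, rfl⟩
    · exact ⟨Aᶜ, Set.mem_insert _ _, hu⟩
  obtain ⟨ℱ, hsub, hfin, hcov⟩ := hCLP 𝒰 hclopen hcover
  have hmemℱ : ∀ i, ({s i} : Set S) ∈ ℱ := by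
    intro i
    have h1 : s i ∈ ⋃₀ ℱ := by rw [hcov]; trivial
    obtain ⟨F, hF, hsF⟩ := h1
    rcases Set.mem_insert_iff.mp (hsub hF) with rfl | ⟨j, rfl⟩
    · exact absurd (hsmem i) hsF
    · have h2 : s i = s j := hsF
      rw [hs_inj h2]
      exact hF
  have hinjsing : Function.Injective (fun i => ({s i} : Set S)) := fun i j h =>
    hs_inj (by simpa [Set.singleton_eq_singleton_iff] using h)
  exact (Set.infinite_of_injective_forall_mem hinjsing hmemℱ) hfin
end
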